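/- arXiv:1310.8056 — 5 statements merged into one kernel-verified Lean document; each statement's English description precedes it below -/
import Mathlib

section
/- For every w ∈ ℂ with w ≠ 0, the theta function θ⁰ satisfies the functional equation θ⁰(q·w) = q⁻¹ · w⁻² · θ⁰(w). -/
/-- The theta function `θ⁰(w) = ∑_{n ∈ ℤ} w^{2n} q^{n²}` (principal-branch powers of `q`). -/
noncomputable def theta0 (q w : ℂ) : ℂ :=
  ∑' n : ℤ, w ^ (2 * n) * q ^ ((n : ℂ) ^ 2)

/-- For `q ∈ ℂ` with `0 < |q| < 1` and every `w ≠ 0`, the theta function `θ⁰`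
satisfies the functional equation `θ⁰(q·w) = q⁻¹ · w⁻² · θ⁰(w)`. -/
theorem theta0_functional_equation (q : ℂ) (hq0 : 0 < ‖q‖)
    (hq1 : ‖q‖ < 1) (w : ℂ) (hw : w ≠ 0) :
    theta0 q (q * w) = q⁻¹ * w ^ (-2 : ℤ) * theta0 q w := by
  have hq : q ≠ 0 := by
    intro h; simp [h] at hq0
  have key : ∀ n : ℤ, (q * w) ^ (2 * n) * q ^ ((n : ℂ) ^ 2)
      = q⁻¹ * w ^ (-2 : ℤ) * (w ^ (2 * (n + 1)) * q ^ (((n + 1 : ℤ) : ℂ) ^ 2)) := by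
    intro n
    have h1 : (q * w) ^ (2 * n) = q ^ (2 * n) * w ^ (2 * n) := mul_zpow q w (2 * n)
    have h2 : q ^ (2 * n) = q ^ (((2 * n : ℤ) : ℂ)) := (Complex.cpow_intCast q (2 * n)).symm
    have h4 : (((n + 1 : ℤ) : ℂ)) ^ 2 = (((2 * n : ℤ) : ℂ) + (n : ℂ) ^ 2) + 1 := by
      push_cast; ring
    have h5 : q ^ ((((2 * n : ℤ) : ℂ) + (n : ℂ) ^ 2) + 1)
        = q ^ (((2 * n : ℤ) : ℂ)) * q ^ ((n : ℂ) ^ 2) * q := by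
      rw [Complex.cpow_add _ _ hq, Complex.cpow_add _ _ hq, Complex.cpow_one]
    have h6 : w ^ (2 * (n + 1)) = w ^ (2 * n) * w ^ (2 : ℤ) := by
      rw [← zpow_add₀ hw]; ring_nf
    rw [h1, h4, h5, h6, ← h2]
    have hw2 : w ^ (-2 : ℤ) * w ^ (2 : ℤ) = 1 := by
      rw [← zpow_add₀ hw]; norm_num
    field_simp
  calc theta0 q (q * w)
      = ∑' n : ℤ, q⁻¹ * w ^ (-2 : ℤ) * (w ^ (2 * (n + 1)) * q ^ (((n + 1 : ℤ) : ℂ) ^ 2)) := by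
        unfold theta0; exact tsum_congr key
    _ = q⁻¹ * w ^ (-2 : ℤ) * ∑' n : ℤ, w ^ (2 * (n + 1)) * q ^ (((n + 1 : ℤ) : ℂ) ^ 2) :=
        tsum_mul_left
    _ = q⁻¹ * w ^ (-2 : ℤ) * theta0 q w := by
        congr 1
        unfold theta0
        exact (Equiv.addRight (1 : ℤ)).tsum_eq (fun n => w ^ (2 * n) * q ^ ((n : ℂ) ^ 2))
end

section
/- Let σ⁰, σ¹ ∈ ℂ and define s : ℂ \ {0} → ℂ by s(w) = σ⁰ θ⁰(w) + σ¹ θ¹(w). For every x ∈ ℝ and every M ∈ ℂ with M ≠ 0 (with q^x := exp(x · Log q)): if s(−q^x M) = 0 then s(−q^{−x} M⁻¹) = 0. -/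
/-- The theta function `θ¹(w) = ∑_{n ∈ ℤ} w^{2n+1} q^{(n+1/2)²}` (principal-branch powers of `q`). -/
noncomputable def theta1 (q w : ℂ) : ℂ :=
  ∑' n : ℤ, w ^ (2 * n + 1) * q ^ (((n : ℂ) + 1 / 2) ^ 2)

lemma theta0_inv (q w : ℂ) : theta0 q w⁻¹ = theta0 q w := by
  rw [theta0, theta0, ← (Equiv.neg ℤ).tsum_eq (fun n : ℤ => w ^ (2 * n) * q ^ ((n : ℂ) ^ 2))]
  refine tsum_congr fun n => ?_
  simp only [Equiv.neg_apply, mul_neg, zpow_neg, inv_zpow, inv_inv, Int.cast_neg, neg_sq]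

lemma theta1_inv (q w : ℂ) : theta1 q w⁻¹ = theta1 q w := by
  let e : ℤ ≃ ℤ := ⟨fun n => -n - 1, fun n => -n - 1, fun n => by ring, fun n => by ring⟩
  rw [theta1, theta1, ← e.tsum_eq (fun n : ℤ => w ^ (2 * n + 1) * q ^ (((n : ℂ) + 1 / 2) ^ 2))]
  refine tsum_congr fun n => ?_
  show (w⁻¹) ^ (2 * n + 1) * q ^ (((n : ℂ) + 1 / 2) ^ 2)
      = w ^ (2 * (-n - 1) + 1) * q ^ ((((-n - 1 : ℤ) : ℂ) + 1 / 2) ^ 2)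
  have h1 : (w⁻¹) ^ (2 * n + 1) = w ^ (2 * (-n - 1) + 1) := by
    rw [inv_zpow, ← zpow_neg]
    congr 1
    ring
  have h2 : ((((-n - 1 : ℤ) : ℂ) + 1 / 2) ^ 2) = (((n : ℂ) + 1 / 2) ^ 2) := by
    push_cast
    ring
  rw [h1, h2]

/-- For `s = σ⁰θ⁰ + σ¹θ¹`, every `x ∈ ℝ` and every `M ≠ 0` (with
`q^x := exp(x · Log q)`): if `s(−q^x M) = 0` then `s(−q^{−x} M⁻¹) = 0`. -/
theorem section_vanishing_at_conjugate_point (q : ℂ) (hq0 : 0 < ‖q‖)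
    (hq1 : ‖q‖ < 1) (σ0 σ1 : ℂ) (s : ℂ → ℂ)
    (hs : ∀ w : ℂ, s w = σ0 * theta0 q w + σ1 * theta1 q w)
    (x : ℝ) (M : ℂ) (hM : M ≠ 0)
    (hzero : s (-(q ^ (x : ℂ) * M)) = 0) :
    s (-(q ^ (-(x : ℂ)) * M⁻¹)) = 0 := by
  have hpt : -(q ^ (-(x : ℂ)) * M⁻¹) = (-(q ^ (x : ℂ) * M))⁻¹ := by
    rw [Complex.cpow_neg, ← mul_inv, ← neg_inv]
  rw [hpt, hs, theta0_inv, theta1_inv, ← hs, hzero]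
end

section
/- The functions θ⁰ and θ¹ are linearly independent over ℂ: if σ⁰, σ¹ ∈ ℂ satisfy σ⁰ θ⁰(w) + σ¹ θ¹(w) = 0 for every w ∈ ℂ with w ≠ 0, then σ⁰ = 0 and σ¹ = 0. -/
open Complex Filter

/-- Laurent series `F(q,z) = ∑ z^n q^{n²}`. -/
noncomputable def thetaF (q z : ℂ) : ℂ := ∑' n : ℤ, z ^ n * q ^ (n ^ 2)

/-- Laurent series `G(q,z) = ∑ z^n q^{n²+n}`. -/
noncomputable def thetaG (q z : ℂ) : ℂ := ∑' n : ℤ, z ^ n * q ^ (n ^ 2 + n)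

lemma theta_aux_nat_summable {a b : ℝ} (ha : 0 < a) (hb0 : 0 < b) (hb1 : b < 1) :
    Summable (fun n : ℕ => a ^ n * b ^ n ^ 2) := by
  apply summable_of_ratio_test_tendsto_lt_one (l := a * b * 0) ?_ ?_ ?_
  · simpa using one_pos
  · filter_upwards with n
    positivity
  · have key : (fun n : ℕ => ‖a ^ (n + 1) * b ^ (n + 1) ^ 2‖ / ‖a ^ n * b ^ n ^ 2‖)
        = fun n : ℕ => a * b * (b ^ 2) ^ n := by
      funext n
      rw [Real.norm_of_nonneg (by positivity), Real.norm_of_nonneg (by positivity)]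
      rw [show (n + 1) ^ 2 = n ^ 2 + (2 * n + 1) by ring, pow_add, pow_succ,
        show 2 * n + 1 = n + (n + 1) by ring, pow_add, pow_succ]
      have h1 : a ^ n * b ^ n ^ 2 ≠ 0 := by positivity
      field_simp
      ring
    rw [key]
    exact (tendsto_pow_atTop_nhds_zero_of_lt_one (by positivity)
      (by nlinarith)).const_mul (a * b)

lemma theta_aux_int_summable {a b : ℝ} (ha : 0 < a) (hb0 : 0 < b) (hb1 : b < 1) :
    Summable (fun n : ℤ => a ^ n * b ^ n ^ 2) := by
  apply Summable.of_nat_of_neg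
  · apply (theta_aux_nat_summable ha hb0 hb1).congr
    intro n
    rw [show ((n : ℤ)) ^ 2 = ((n ^ 2 : ℕ) : ℤ) by push_cast; ring, zpow_natCast, zpow_natCast]
  · apply (theta_aux_nat_summable (a := a⁻¹) (by positivity) hb0 hb1).congr
    intro n
    rw [show ((-(n : ℤ))) ^ 2 = ((n ^ 2 : ℕ) : ℤ) by push_cast; ring, zpow_natCast,
      zpow_neg, zpow_natCast, inv_pow]

lemma theta_summable {q z : ℂ} (hq0 : q ≠ 0) (hq1 : ‖q‖ < 1) (hz : z ≠ 0) (c : ℤ) :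
    Summable (fun n : ℤ => z ^ n * q ^ (n ^ 2 + c * n)) := by
  have hq0' : ‖q‖ ≠ 0 := by simpa using hq0
  have hz' : ‖z‖ ≠ 0 := by simpa using hz
  apply Summable.of_norm
  have key : ∀ n : ℤ, ‖z ^ n * q ^ (n ^ 2 + c * n)‖
      = (‖z‖ * ‖q‖ ^ c) ^ n * ‖q‖ ^ n ^ 2 := by
    intro n
    rw [norm_mul, norm_zpow, norm_zpow,
      zpow_add₀ hq0', zpow_mul, mul_zpow]
    ring
  simp_rw [key]
  exact theta_aux_int_summable (by positivity) (by positivity) hq1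

lemma thetaF_summable {q z : ℂ} (hq0 : q ≠ 0) (hq1 : ‖q‖ < 1) (hz : z ≠ 0) :
    Summable (fun n : ℤ => z ^ n * q ^ n ^ 2) := by
  apply (theta_summable hq0 hq1 hz 0).congr
  intro n; norm_num

lemma thetaG_summable {q z : ℂ} (hq0 : q ≠ 0) (hq1 : ‖q‖ < 1) (hz : z ≠ 0) :
    Summable (fun n : ℤ => z ^ n * q ^ (n ^ 2 + n)) := by
  apply (theta_summable hq0 hq1 hz 1).congr
  intro n; norm_num

/-- key parity identity for F -/
lemma thetaF_add_neg {q z : ℂ} (hq0 : q ≠ 0) (hq1 : ‖q‖ < 1) (hz : z ≠ 0) :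
    thetaF q z + thetaF q (-z) = 2 * thetaF (q ^ 4) (z ^ 2) := by
  have h1 := thetaF_summable hq0 hq1 hz
  have h2 := thetaF_summable hq0 hq1 (neg_ne_zero.mpr hz)
  have step1 : thetaF q z + thetaF q (-z)
      = ∑' n : ℤ, (z ^ n * q ^ n ^ 2 + (-z) ^ n * q ^ n ^ 2) := (h1.tsum_add h2).symm
  rw [step1]
  set f : ℤ → ℂ := fun n => z ^ n * q ^ n ^ 2 + (-z) ^ n * q ^ n ^ 2 with hf
  have hsupp : Function.support f ⊆ Set.range (fun m : ℤ => 2 * m) := by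
    intro n hn
    rcases Int.even_or_odd n with he | ho
    · obtain ⟨m, hm⟩ := he
      exact ⟨m, by dsimp only; omega⟩
    · exfalso
      apply hn
      obtain ⟨m, hm⟩ := ho
      have : (-z) ^ n = -z ^ n := by
        rw [show -z = -1 * z from by ring, mul_zpow, hm, zpow_add₀ (by norm_num : (-1:ℂ) ≠ 0),
          zpow_mul]
        norm_num
      simp only [hf, this]
      ring
  have step2 : ∑' n : ℤ, f n = ∑' m : ℤ, f (2 * m) :=
    (Function.Injective.tsum_eq (fun a b hab => by omega) hsupp).symm
  rw [step2]
  have step3 : ∀ m : ℤ, f (2 * m) = 2 * ((z ^ 2) ^ m * (q ^ 4) ^ m ^ 2) := by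
    intro m
    have e1 : z ^ (2 * m) = (z ^ 2) ^ m := by rw [zpow_mul]; norm_cast
    have e2 : (-z) ^ (2 * m) = (z ^ 2) ^ m := by
      rw [zpow_mul]; norm_cast; rw [neg_sq]
    have e3 : q ^ (2 * m) ^ 2 = (q ^ 4) ^ m ^ 2 := by
      rw [show (2 * m) ^ 2 = 4 * m ^ 2 by ring, zpow_mul]; norm_cast
    simp only [hf, e1, e2, e3]
    ring
  rw [tsum_congr step3, tsum_mul_left]
  rfl

/-- key parity identity for G -/
lemma thetaG_add_neg {q z : ℂ} (hq0 : q ≠ 0) (hq1 : ‖q‖ < 1) (hz : z ≠ 0) :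
    thetaG q z + thetaG q (-z) = 2 * thetaF (q ^ 4) (z ^ 2 * q ^ 2) := by
  have h1 := thetaG_summable hq0 hq1 hz
  have h2 := thetaG_summable hq0 hq1 (neg_ne_zero.mpr hz)
  have step1 : thetaG q z + thetaG q (-z)
      = ∑' n : ℤ, (z ^ n * q ^ (n ^ 2 + n) + (-z) ^ n * q ^ (n ^ 2 + n)) := (h1.tsum_add h2).symm
  rw [step1]
  set f : ℤ → ℂ := fun n => z ^ n * q ^ (n ^ 2 + n) + (-z) ^ n * q ^ (n ^ 2 + n) with hf
  have hsupp : Function.support f ⊆ Set.range (fun m : ℤ => 2 * m) := by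
    intro n hn
    rcases Int.even_or_odd n with he | ho
    · obtain ⟨m, hm⟩ := he
      exact ⟨m, by dsimp only; omega⟩
    · exfalso
      apply hn
      obtain ⟨m, hm⟩ := ho
      have : (-z) ^ n = -z ^ n := by
        rw [show -z = -1 * z from by ring, mul_zpow, hm, zpow_add₀ (by norm_num : (-1:ℂ) ≠ 0),
          zpow_mul]
        norm_num
      simp only [hf, this]
      ring
  have step2 : ∑' n : ℤ, f n = ∑' m : ℤ, f (2 * m) :=
    (Function.Injective.tsum_eq (fun a b hab => by omega) hsupp).symm
  rw [step2]
  have step3 : ∀ m : ℤ, f (2 * m) = 2 * ((z ^ 2 * q ^ 2) ^ m * (q ^ 4) ^ m ^ 2) := by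
    intro m
    have e1 : z ^ (2 * m) = (z ^ 2) ^ m := by rw [zpow_mul]; norm_cast
    have e2 : (-z) ^ (2 * m) = (z ^ 2) ^ m := by
      rw [zpow_mul]; norm_cast; rw [neg_sq]
    have e3 : q ^ ((2 * m) ^ 2 + 2 * m) = (q ^ 4) ^ m ^ 2 * (q ^ 2) ^ m := by
      rw [show (2 * m) ^ 2 + 2 * m = 4 * m ^ 2 + 2 * m by ring, zpow_add₀ hq0,
        zpow_mul, zpow_mul]
      norm_cast
    simp only [hf, e1, e2, e3, mul_zpow]
    ring
  rw [tsum_congr step3, tsum_mul_left]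
  rfl

lemma thetaF_one_ne_zero {q : ℂ} (hq0 : q ≠ 0) (hq : ‖q‖ < 1 / 4) :
    thetaF q 1 ≠ 0 := by
  have hq1 : ‖q‖ < 1 := lt_trans hq (by norm_num)
  have hs' : Summable (fun n : ℤ => q ^ n ^ 2) :=
    (thetaF_summable hq0 hq1 one_ne_zero).congr (fun n => by rw [one_zpow, one_mul])
  have heq : thetaF q 1 = ∑' n : ℤ, q ^ n ^ 2 :=
    tsum_congr (fun n => by rw [one_zpow, one_mul])
  set g : ℤ → ℝ := fun n => if n = 0 then 0 else (1 / 4 : ℝ) ^ n.natAbs with hg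
  have hbound : ∀ n : ℤ, ‖(if n = (0 : ℤ) then 0 else q ^ n ^ 2)‖ ≤ g n := by
    intro n
    by_cases hn : n = 0
    · simp [hn, hg]
    · simp only [hn, if_false, hg]
      rw [norm_zpow]
      have h2 : (n ^ 2 : ℤ) = ((n.natAbs ^ 2 : ℕ) : ℤ) := by
        push_cast
        rw [← _root_.sq_abs]
      rw [h2, zpow_natCast]
      calc ‖q‖ ^ n.natAbs ^ 2 ≤ (1 / 4 : ℝ) ^ n.natAbs ^ 2 :=
            pow_le_pow_left₀ (norm_nonneg q) hq.le _
        _ ≤ (1 / 4 : ℝ) ^ n.natAbs :=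
            pow_le_pow_of_le_one (by norm_num) (by norm_num)
              (Nat.le_self_pow two_ne_zero _)
  have h_pos : HasSum (fun n : ℕ => g n) (1 / 3 : ℝ) := by
    have hgeo : HasSum (fun n : ℕ => (1 / 4 : ℝ) ^ n) (4 / 3 : ℝ) := by
      have hh := hasSum_geometric_of_lt_one (by norm_num : (0:ℝ) ≤ 1/4) (by norm_num)
      norm_num at hh
      exact hh
    have hdelta : HasSum (fun n : ℕ => if n = 0 then (1:ℝ) else 0) 1 := hasSum_ite_eq 0 1
    have := hgeo.sub hdelta
    have heq2 : (fun n : ℕ => (1 / 4 : ℝ) ^ n - if n = 0 then (1:ℝ) else 0)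
        = fun n : ℕ => g n := by
      funext n
      by_cases hn : n = 0 <;> simp [hn, hg]
    rw [heq2] at this
    have e : (4 / 3 - 1 : ℝ) = 1 / 3 := by norm_num
    rw [e] at this
    exact this
  have h_neg : HasSum (fun n : ℕ => g (-(n + 1))) (1 / 3 : ℝ) := by
    have hgeo : HasSum (fun n : ℕ => (1 / 4 : ℝ) * (1 / 4 : ℝ) ^ n) ((1/4) * (4 / 3) : ℝ) := by
      apply HasSum.mul_left
      have hh := hasSum_geometric_of_lt_one (by norm_num : (0:ℝ) ≤ 1/4) (by norm_num)
      norm_num at hh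
      exact hh
    have heq2 : (fun n : ℕ => (1 / 4 : ℝ) * (1 / 4 : ℝ) ^ n) = fun n : ℕ => g (-(n + 1)) := by
      funext n
      have h1 : (-((n : ℤ) + 1)) ≠ 0 := by omega
      have h2 : (-((n : ℤ) + 1)).natAbs = n + 1 := by omega
      simp only [hg, h1, if_false, h2, pow_succ]
      ring
    rw [heq2] at hgeo
    convert hgeo using 1
    norm_num
  have hgsum : HasSum g (2 / 3 : ℝ) := by
    have := HasSum.of_nat_of_neg_add_one h_pos h_neg
    convert this using 1
    norm_num
  have hsplit : thetaF q 1 = 1 + ∑' n : ℤ, (if n = (0:ℤ) then 0 else q ^ n ^ 2) := by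
    rw [heq, hs'.tsum_eq_add_tsum_ite 0]
    norm_num
  intro hzero
  have hR : ‖∑' n : ℤ, (if n = (0:ℤ) then 0 else q ^ n ^ 2)‖ = 1 := by
    have : ∑' n : ℤ, (if n = (0:ℤ) then 0 else q ^ n ^ 2) = -1 := by
      rw [hsplit] at hzero
      linear_combination hzero
    rw [this]
    simp
  have hle := tsum_of_norm_bounded hgsum hbound
  rw [hR] at hle
  norm_num at hle

lemma thetaF_not_allzero {q : ℂ} (hq0 : q ≠ 0) (hq1 : ‖q‖ < 1)
    (H : ∀ z : ℂ, z ≠ 0 → thetaF q z = 0) : False := by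
  have double : ∀ Q : ℂ, Q ≠ 0 → ‖Q‖ < 1 →
      (∀ z : ℂ, z ≠ 0 → thetaF Q z = 0) → ∀ z : ℂ, z ≠ 0 → thetaF (Q ^ 4) z = 0 := by
    intro Q hQ0 hQ1 hH y hy
    obtain ⟨z, hz2⟩ := IsAlgClosed.exists_pow_nat_eq y (n := 2) (by norm_num)
    have hz : z ≠ 0 := by
      rintro rfl
      rw [← hz2] at hy
      simp at hy
    have key := thetaF_add_neg hQ0 hQ1 hz
    rw [hH z hz, hH (-z) (neg_ne_zero.mpr hz), hz2] at key
    have h2 : 2 * thetaF (Q ^ 4) y = 0 := by linear_combination -key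
    exact (mul_eq_zero.mp h2).resolve_left two_ne_zero
  have key : ∀ k : ℕ, ∀ z : ℂ, z ≠ 0 → thetaF (q ^ 4 ^ k) z = 0 := by
    intro k
    induction k with
    | zero => simpa using H
    | succ k ih =>
      intro z hz
      have h0 : q ^ 4 ^ k ≠ 0 := pow_ne_zero _ hq0
      have h1 : ‖q ^ 4 ^ k‖ < 1 := by
        rw [norm_pow]
        exact pow_lt_one₀ (norm_nonneg q) hq1 (by positivity)
      have hd := double _ h0 h1 ih z hz
      rwa [← pow_mul, ← pow_succ] at hd
  obtain ⟨m, hm⟩ := exists_pow_lt_of_lt_one (by norm_num : (0:ℝ) < 1/4) hq1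
  have h4 : ‖q ^ 4 ^ m‖ < 1 / 4 := by
    rw [norm_pow]
    calc ‖q‖ ^ 4 ^ m ≤ ‖q‖ ^ m :=
          pow_le_pow_of_le_one (norm_nonneg q) hq1.le
            (Nat.lt_pow_self (n := m) (by norm_num : 1 < 4)).le
      _ < 1 / 4 := hm
  exact thetaF_one_ne_zero (pow_ne_zero _ hq0) h4 (key m 1 one_ne_zero)

lemma theta0_eq_thetaF (q w : ℂ) : theta0 q w = thetaF q (w ^ 2) := by
  apply tsum_congr
  intro n
  rw [show ((n : ℂ) ^ 2) = (((n ^ 2 : ℤ)) : ℂ) by push_cast; ring, Complex.cpow_intCast,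
    zpow_mul]
  norm_cast

lemma theta1_eq_thetaG {q : ℂ} (hq0 : q ≠ 0) (w : ℂ) (hw : w ≠ 0) :
    theta1 q w = w * q ^ ((1 : ℂ) / 4) * thetaG q (w ^ 2) := by
  have key : ∀ n : ℤ, w ^ (2 * n + 1) * q ^ (((n : ℂ) + 1 / 2) ^ 2)
      = (w * q ^ ((1 : ℂ) / 4)) * ((w ^ 2) ^ n * q ^ (n ^ 2 + n)) := by
    intro n
    have e1 : (((n : ℂ) + 1 / 2) ^ 2) = (((n ^ 2 + n : ℤ)) : ℂ) + 1 / 4 := by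
      push_cast; ring
    rw [e1, Complex.cpow_add _ _ hq0, Complex.cpow_intCast]
    have e2 : w ^ (2 * n + 1) = (w ^ 2) ^ n * w := by
      rw [zpow_add₀ hw, zpow_mul, zpow_one]
      norm_cast
    rw [e2]
    ring
  rw [theta1, tsum_congr key, tsum_mul_left, thetaG]

/-- `θ⁰` and `θ¹` are linearly independent over `ℂ`: if
`σ⁰θ⁰(w) + σ¹θ¹(w) = 0` for all `w ≠ 0`, then `σ⁰ = σ¹ = 0`. -/
theorem theta_linearly_independent (q : ℂ) (hq0 : 0 < ‖q‖)
    (hq1 : ‖q‖ < 1) (σ0 σ1 : ℂ)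
    (h : ∀ w : ℂ, w ≠ 0 → σ0 * theta0 q w + σ1 * theta1 q w = 0) :
    σ0 = 0 ∧ σ1 = 0 := by
  have hq0' : q ≠ 0 := by
    intro hq
    rw [hq] at hq0
    simp at hq0
  have hdec : ∀ w : ℂ, w ≠ 0 → σ0 * theta0 q w = 0 ∧ σ1 * theta1 q w = 0 := by
    intro w hw
    have h1 := h w hw
    have h2 := h (-w) (neg_ne_zero.mpr hw)
    have e0 : theta0 q (-w) = theta0 q w := by
      rw [theta0_eq_thetaF, theta0_eq_thetaF, neg_sq]
    have e1 : theta1 q (-w) = -theta1 q w := by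
      rw [theta1_eq_thetaG hq0' _ (neg_ne_zero.mpr hw), theta1_eq_thetaG hq0' _ hw, neg_sq]
      ring
    rw [e0, e1] at h2
    constructor
    · linear_combination (h1 + h2) / 2
    · linear_combination (h1 - h2) / 2
  constructor
  · by_contra hσ
    apply thetaF_not_allzero hq0' hq1
    intro z hz
    obtain ⟨w, hw2⟩ := IsAlgClosed.exists_pow_nat_eq z (n := 2) (by norm_num)
    have hw : w ≠ 0 := by
      rintro rfl
      rw [← hw2] at hz
      simp at hz
    have h0 := (hdec w hw).1
    rw [theta0_eq_thetaF] at h0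
    rw [← hw2]
    exact (mul_eq_zero.mp h0).resolve_left hσ
  · by_contra hσ
    have hq14 : q ^ ((1 : ℂ) / 4) ≠ 0 := by
      intro hc
      rcases (Complex.cpow_eq_zero_iff q _).mp hc with ⟨h1, -⟩
      exact hq0' h1
    have hG : ∀ z : ℂ, z ≠ 0 → thetaG q z = 0 := by
      intro z hz
      obtain ⟨w, hw2⟩ := IsAlgClosed.exists_pow_nat_eq z (n := 2) (by norm_num)
      have hw : w ≠ 0 := by
        rintro rfl
        rw [← hw2] at hz
        simp at hz
      have h0 := (hdec w hw).2
      rw [theta1_eq_thetaG hq0' _ hw] at h0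
      rw [← hw2]
      have h1 := (mul_eq_zero.mp h0).resolve_left hσ
      rcases mul_eq_zero.mp h1 with h2 | h2
      · exact absurd h2 (mul_ne_zero hw hq14)
      · exact h2
    apply thetaF_not_allzero (q := q ^ 4) (pow_ne_zero _ hq0')
      (by rw [norm_pow]; exact pow_lt_one₀ (norm_nonneg q) hq1 (by norm_num))
    intro y hy
    have hyq : y / q ^ 2 ≠ 0 := by
      apply div_ne_zero hy (pow_ne_zero _ hq0')
    obtain ⟨z, hz2⟩ := IsAlgClosed.exists_pow_nat_eq (y / q ^ 2) (n := 2) (by norm_num)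
    have hz : z ≠ 0 := by
      rintro rfl
      rw [← hz2] at hyq
      simp at hyq
    have key := thetaG_add_neg hq0' hq1 hz
    rw [hG z hz, hG (-z) (neg_ne_zero.mpr hz)] at key
    have hzz : z ^ 2 * q ^ 2 = y := by
      rw [hz2]
      field_simp
    rw [hzz] at key
    have h2 : 2 * thetaF (q ^ 4) y = 0 := by linear_combination -key
    exact (mul_eq_zero.mp h2).resolve_left two_ne_zero
end

section
/- The theta functions θ⁰ and θ¹ have no common zero: there is no w ∈ ℂ with w ≠ 0 such that θ⁰(w) = 0 and θ¹(w) = 0. -/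
open Filter

noncomputable def th0 (q w : ℂ) : ℂ := ∑' n : ℤ, w ^ (2*n) * q ^ (n^2 : ℤ)
noncomputable def th1 (q w : ℂ) : ℂ := ∑' n : ℤ, w ^ (2*n+1) * q ^ (n^2+n : ℤ)

lemma summable_nat_aux (x r : ℝ) (hx : 0 < x) (hr0 : 0 < r) (hr1 : r < 1) (a b c : ℤ) :
    Summable (fun n : ℕ => x ^ (2*(n:ℤ)+a) * r ^ ((n:ℤ)^2 + b*n + c)) := by
  apply summable_of_ratio_norm_eventually_le (r := 1/2) (by norm_num)
  have key : Tendsto (fun n : ℕ => (x^2 * r^(1+b:ℤ)) * (r^2)^n) atTop (nhds 0) := by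
    simpa using (tendsto_pow_atTop_nhds_zero_of_lt_one (by positivity)
      (by nlinarith : r^2 < 1)).const_mul (x^2 * r^(1+b:ℤ))
  have hev : ∀ᶠ n : ℕ in atTop, (x^2 * r^(1+b:ℤ)) * (r^2)^n ≤ 1/2 :=
    key.eventually_le_const (by norm_num)
  filter_upwards [hev] with n hn
  have hxne : x ≠ 0 := hx.ne'
  have hrne : r ≠ 0 := hr0.ne'
  have hsplit : x ^ (2*((n:ℤ)+1)+a) * r ^ (((n:ℤ)+1)^2 + b*((n:ℤ)+1) + c)
      = ((x^2 * r^(1+b:ℤ)) * (r^2)^n) * (x ^ (2*(n:ℤ)+a) * r ^ ((n:ℤ)^2 + b*n + c)) := by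
    have e1 : (2*((n:ℤ)+1)+a) = 2 + (2*(n:ℤ)+a) := by ring
    have e2 : (((n:ℤ)+1)^2 + b*((n:ℤ)+1) + c) = (1+b) + 2*(n:ℤ) + ((n:ℤ)^2 + b*n + c) := by ring
    rw [e1, e2, zpow_add₀ hxne, zpow_add₀ hrne, zpow_add₀ hrne]
    have : r ^ (2*(n:ℤ)) = ((r^2)^n : ℝ) := by
      rw [show (2*(n:ℤ)) = ((2*n : ℕ) : ℤ) by push_cast; ring, zpow_natCast, pow_mul]
    rw [this]
    have : x ^ (2:ℤ) = x^2 := by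
      rw [show (2:ℤ) = ((2:ℕ):ℤ) from rfl, zpow_natCast]
    rw [this]; ring
  have hpos : (0:ℝ) ≤ x ^ (2*(n:ℤ)+a) * r ^ ((n:ℤ)^2 + b*n + c) := by positivity
  calc ‖x ^ (2*((n:ℤ)+1)+a) * r ^ (((n:ℤ)+1)^2 + b*((n:ℤ)+1) + c)‖
      = ((x^2 * r^(1+b:ℤ)) * (r^2)^n) * ‖x ^ (2*(n:ℤ)+a) * r ^ ((n:ℤ)^2 + b*n + c)‖ := by
        rw [Real.norm_eq_abs, Real.norm_eq_abs, hsplit, abs_mul]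
        have : |(x^2 * r^(1+b:ℤ)) * (r^2)^n| = (x^2 * r^(1+b:ℤ)) * (r^2)^n := by
          apply abs_of_nonneg; positivity
        rw [this]
    _ ≤ 1/2 * ‖x ^ (2*(n:ℤ)+a) * r ^ ((n:ℤ)^2 + b*n + c)‖ := by
        apply mul_le_mul_of_nonneg_right hn (norm_nonneg _)

lemma summable_norm_int (q w : ℂ) (hq0 : q ≠ 0) (hq1 : ‖q‖ < 1) (hw : w ≠ 0) (a b c : ℤ) :
    Summable (fun n : ℤ => ‖w ^ (2*n+a) * q ^ (n^2 + b*n + c)‖) := by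
  have hwa : (0:ℝ) < ‖w‖ := norm_pos_iff.mpr hw
  have hqa : (0:ℝ) < ‖q‖ := norm_pos_iff.mpr hq0
  apply Summable.of_nat_of_neg
  · have := summable_nat_aux ‖w‖ ‖q‖ hwa hqa hq1 a b c
    apply this.congr
    intro n
    rw [norm_mul, norm_zpow, norm_zpow]
  · have := summable_nat_aux ‖w‖⁻¹ ‖q‖ (by positivity) hqa hq1 (-a) (-b) c
    apply this.congr
    intro n
    rw [norm_mul, norm_zpow, norm_zpow, inv_zpow, ← zpow_neg]
    congr 2
    · ring
    · ring

lemma summable_int (q w : ℂ) (hq0 : q ≠ 0) (hq1 : ‖q‖ < 1) (hw : w ≠ 0) (a b c : ℤ) :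
    Summable (fun n : ℤ => w ^ (2*n+a) * q ^ (n^2 + b*n + c)) :=
  (summable_norm_int q w hq0 hq1 hw a b c).of_norm
lemma my_hasSum_sum_type {M : Type*} [AddCommMonoid M] [TopologicalSpace M] [ContinuousAdd M]
    {β γ : Type*} {f : β ⊕ γ → M} {a b : M}
    (h1 : HasSum (fun x => f (.inl x)) a) (h2 : HasSum (fun x => f (.inr x)) b) :
    HasSum f (a + b) := by
  have hc : IsCompl (Set.range (Sum.inl : β → β ⊕ γ)) (Set.range (Sum.inr : γ → β ⊕ γ)) :=
    Set.isCompl_range_inl_range_inr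
  exact (Sum.inl_injective.hasSum_range_iff.mpr h1).add_isCompl hc
    (Sum.inr_injective.hasSum_range_iff.mpr h2)

lemma my_tsum_sum_type {β γ : Type*} {f : β ⊕ γ → ℂ} (hf : Summable f) :
    ∑' x, f x = ∑' a, f (.inl a) + ∑' b, f (.inr b) := by
  have h1 : Summable (fun x => f (.inl x)) := hf.comp_injective Sum.inl_injective
  have h2 : Summable (fun x => f (.inr x)) := hf.comp_injective Sum.inr_injective
  exact (my_hasSum_sum_type h1.hasSum h2.hasSum).tsum_eq

/-- parity equiv: inl (t,k) ↦ (t+k, t−k) (even coord-sum), inr (t,k) ↦ (t+k+1, t−k). -/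
def parEquiv : (ℤ×ℤ) ⊕ (ℤ×ℤ) ≃ ℤ×ℤ where
  toFun p := match p with
    | .inl (t,k) => (t+k, t-k)
    | .inr (t,k) => (t+k+1, t-k)
  invFun p := if (p.1+p.2) % 2 = 0 then .inl ((p.1+p.2)/2, (p.1-p.2)/2)
    else .inr ((p.1+p.2-1)/2, (p.1-p.2-1)/2)
  left_inv p := by
    rcases p with ⟨t,k⟩ | ⟨t,k⟩
    · have h : ((t+k)+(t-k)) % 2 = 0 := by omega
      simp only [h, if_pos, Sum.inl.injEq, Prod.mk.injEq]
      constructor <;> omega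
    · have h : ¬ (((t+k+1)+(t-k)) % 2 = 0) := by omega
      simp only [h, if_neg, if_false, Sum.inr.injEq, Prod.mk.injEq]
      constructor <;> omega
  right_inv p := by
    rcases p with ⟨m,n⟩
    by_cases h : (m+n) % 2 = 0
    · simp only [h, if_pos, Prod.mk.injEq]
      constructor <;> omega
    · simp only [h, if_neg, if_false, Prod.mk.injEq]
      constructor <;> omega

lemma split_parity (F : ℤ×ℤ → ℂ) (hF : Summable F) :
    ∑' p : ℤ×ℤ, F p
      = (∑' p : ℤ×ℤ, F (p.1+p.2, p.1-p.2)) + ∑' p : ℤ×ℤ, F (p.1+p.2+1, p.1-p.2) := by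
  rw [← parEquiv.tsum_eq F, my_tsum_sum_type (f := fun c => F (parEquiv c)) ((hF.comp_injective parEquiv.injective : Summable (F ∘ parEquiv)))]
  rfl

/-- even/odd equiv: inl k ↦ 2k, inr k ↦ 2k+1 -/
def evenOddEquiv : ℤ ⊕ ℤ ≃ ℤ where
  toFun p := match p with
    | .inl k => 2*k
    | .inr k => 2*k+1
  invFun n := if n % 2 = 0 then .inl (n/2) else .inr ((n-1)/2)
  left_inv p := by
    rcases p with k | k
    · have h : (2*k) % 2 = 0 := by omega
      simp only [h, if_pos, Sum.inl.injEq]; omega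
    · have h : ¬ ((2*k+1) % 2 = 0) := by omega
      simp only [h, if_neg, if_false, Sum.inr.injEq]; omega
  right_inv n := by
    by_cases h : n % 2 = 0
    · simp only [h, if_pos]; omega
    · simp only [h, if_neg, if_false]; omega

lemma split_even_odd (f : ℤ → ℂ) (hf : Summable f) :
    ∑' n : ℤ, f n = (∑' k : ℤ, f (2*k)) + ∑' k : ℤ, f (2*k+1) := by
  rw [← evenOddEquiv.tsum_eq f, my_tsum_sum_type (f := fun c => f (evenOddEquiv c)) ((hf.comp_injective evenOddEquiv.injective : Summable (f ∘ evenOddEquiv)))]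
  rfl
lemma sq_zpow (x : ℂ) (a : ℤ) : (x^2)^a = x^(2*a) := by
  rw [← zpow_natCast x 2, ← zpow_mul]; norm_num

lemma collect {w q : ℂ} (hw : w ≠ 0) (hq : q ≠ 0) (a b c d : ℤ) :
    (w^a * q^b) * (w^c * q^d) = w^(a+c) * q^(b+d) := by
  rw [zpow_add₀ hw, zpow_add₀ hq]; ring

lemma wqform {w q : ℂ} {a b a' b' : ℤ} (ha : a = a') (hb : b = b') :
    w ^ a * q ^ b = w ^ a' * q ^ b' := by rw [ha, hb]

lemma prodform {w q : ℂ} (hq : q ≠ 0) (a b c d : ℤ) :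
    (w^a * q^b) * ((1:ℂ)^c * q^d) = w^a * q^(b+d) := by
  rw [one_zpow, one_mul, mul_assoc, ← zpow_add₀ hq]

lemma qprodform {w q : ℂ} (hq : q ≠ 0) (a b : ℤ) :
    q * (w^a * q^b) = w^a * q^(b+1) := by
  rw [zpow_add₀ hq, zpow_one]; ring

lemma doubling0 {q w : ℂ} (hq : q ≠ 0) (hq1 : ‖q‖ < 1) (hw : w ≠ 0) :
    th0 q w ^ 2 = th0 (q^2) (w^2) * th0 (q^2) 1 + q * (th1 (q^2) (w^2) * th1 (q^2) 1) := by
  have hq2 : q^2 ≠ 0 := pow_ne_zero _ hq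
  have hq21 : ‖q^2‖ < 1 := by rw [norm_pow]; nlinarith [norm_nonneg q]
  have hw2 : w^2 ≠ 0 := pow_ne_zero _ hw
  have hf0 : Summable (fun n : ℤ => ‖w^(2*n) * q^(n^2:ℤ)‖) := by
    simpa using summable_norm_int q w hq hq1 hw 0 0 0
  have hg0 : Summable (fun t : ℤ => ‖(w^2)^(2*t) * (q^2)^(t^2:ℤ)‖) := by
    simpa using summable_norm_int (q^2) (w^2) hq2 hq21 hw2 0 0 0
  have hh0 : Summable (fun k : ℤ => ‖(1:ℂ)^(2*k) * (q^2)^(k^2:ℤ)‖) := by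
    simpa using summable_norm_int (q^2) 1 hq2 hq21 one_ne_zero 0 0 0
  have hg1 : Summable (fun t : ℤ => ‖(w^2)^(2*t+1) * (q^2)^(t^2+t:ℤ)‖) := by
    simpa using summable_norm_int (q^2) (w^2) hq2 hq21 hw2 1 1 0
  have hh1 : Summable (fun k : ℤ => ‖(1:ℂ)^(2*k+1) * (q^2)^(k^2+k:ℤ)‖) := by
    simpa using summable_norm_int (q^2) 1 hq2 hq21 one_ne_zero 1 1 0
  have hF : Summable (fun p : ℤ×ℤ => (w^(2*p.1) * q^(p.1^2:ℤ)) * (w^(2*p.2) * q^(p.2^2:ℤ))) :=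
    (hf0.mul_norm hf0).of_norm
  have step1 : th0 q w ^ 2
      = ∑' p : ℤ×ℤ, (w^(2*p.1) * q^(p.1^2:ℤ)) * (w^(2*p.2) * q^(p.2^2:ℤ)) := by
    rw [th0, sq, tsum_mul_tsum_of_summable_norm hf0 hf0]
  rw [step1, split_parity _ hF]
  congr 1
  · have hpt : ∀ p : ℤ×ℤ,
        (w^(2*(p.1+p.2)) * q^((p.1+p.2)^2:ℤ)) * (w^(2*(p.1-p.2)) * q^((p.1-p.2)^2:ℤ))
        = ((w^2)^(2*p.1) * (q^2)^(p.1^2:ℤ)) * ((1:ℂ)^(2*p.2) * (q^2)^(p.2^2:ℤ)) := by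
      intro p
      rw [collect hw hq, sq_zpow, sq_zpow, sq_zpow, prodform hq]
      exact wqform (by ring) (by ring)
    rw [tsum_congr hpt, ← tsum_mul_tsum_of_summable_norm hg0 hh0]
    rfl
  · have hpt : ∀ p : ℤ×ℤ,
        (w^(2*(p.1+p.2+1)) * q^((p.1+p.2+1)^2:ℤ)) * (w^(2*(p.1-p.2)) * q^((p.1-p.2)^2:ℤ))
        = q * (((w^2)^(2*p.1+1) * (q^2)^(p.1^2+p.1:ℤ)) * ((1:ℂ)^(2*p.2+1) * (q^2)^(p.2^2+p.2:ℤ))) := by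
      intro p
      rw [collect hw hq, sq_zpow, sq_zpow, sq_zpow, prodform hq, qprodform hq]
      exact wqform (by ring) (by ring)
    rw [tsum_congr hpt, tsum_mul_left, ← tsum_mul_tsum_of_summable_norm hg1 hh1]
    rfl

lemma doubling1 {q w : ℂ} (hq : q ≠ 0) (hq1 : ‖q‖ < 1) (hw : w ≠ 0) :
    th1 q w ^ 2 = th1 (q^2) (w^2) * th0 (q^2) 1 + th0 (q^2) (w^2) * th1 (q^2) 1 := by
  have hq2 : q^2 ≠ 0 := pow_ne_zero _ hq
  have hq21 : ‖q^2‖ < 1 := by rw [norm_pow]; nlinarith [norm_nonneg q]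
  have hw2 : w^2 ≠ 0 := pow_ne_zero _ hw
  have hf1 : Summable (fun n : ℤ => ‖w^(2*n+1) * q^(n^2+n:ℤ)‖) := by
    simpa using summable_norm_int q w hq hq1 hw 1 1 0
  have hg0 : Summable (fun t : ℤ => ‖(w^2)^(2*t) * (q^2)^(t^2:ℤ)‖) := by
    simpa using summable_norm_int (q^2) (w^2) hq2 hq21 hw2 0 0 0
  have hg0' : Summable (fun t : ℤ => ‖(w^2)^(2*(t+1)) * (q^2)^((t+1)^2:ℤ)‖) := by
    have := summable_norm_int (q^2) (w^2) hq2 hq21 hw2 2 2 1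
    apply this.congr
    intro n
    congr 2 <;> ring
  have hh0 : Summable (fun k : ℤ => ‖(1:ℂ)^(2*k) * (q^2)^(k^2:ℤ)‖) := by
    simpa using summable_norm_int (q^2) 1 hq2 hq21 one_ne_zero 0 0 0
  have hg1 : Summable (fun t : ℤ => ‖(w^2)^(2*t+1) * (q^2)^(t^2+t:ℤ)‖) := by
    simpa using summable_norm_int (q^2) (w^2) hq2 hq21 hw2 1 1 0
  have hh1 : Summable (fun k : ℤ => ‖(1:ℂ)^(2*k+1) * (q^2)^(k^2+k:ℤ)‖) := by
    simpa using summable_norm_int (q^2) 1 hq2 hq21 one_ne_zero 1 1 0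
  have hF : Summable (fun p : ℤ×ℤ => (w^(2*p.1+1) * q^(p.1^2+p.1:ℤ)) * (w^(2*p.2+1) * q^(p.2^2+p.2:ℤ))) :=
    (hf1.mul_norm hf1).of_norm
  have step1 : th1 q w ^ 2
      = ∑' p : ℤ×ℤ, (w^(2*p.1+1) * q^(p.1^2+p.1:ℤ)) * (w^(2*p.2+1) * q^(p.2^2+p.2:ℤ)) := by
    rw [th1, sq, tsum_mul_tsum_of_summable_norm hf1 hf1]
  rw [step1, split_parity _ hF]
  congr 1
  · have hpt : ∀ p : ℤ×ℤ,
        (w^(2*(p.1+p.2)+1) * q^((p.1+p.2)^2+(p.1+p.2):ℤ)) * (w^(2*(p.1-p.2)+1) * q^((p.1-p.2)^2+(p.1-p.2):ℤ))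
        = ((w^2)^(2*p.1+1) * (q^2)^(p.1^2+p.1:ℤ)) * ((1:ℂ)^(2*p.2) * (q^2)^(p.2^2:ℤ)) := by
      intro p
      rw [collect hw hq, sq_zpow, sq_zpow, sq_zpow, prodform hq]
      exact wqform (by ring) (by ring)
    rw [tsum_congr hpt, ← tsum_mul_tsum_of_summable_norm hg1 hh0]
    rfl
  · have hpt : ∀ p : ℤ×ℤ,
        (w^(2*(p.1+p.2+1)+1) * q^((p.1+p.2+1)^2+(p.1+p.2+1):ℤ)) * (w^(2*(p.1-p.2)+1) * q^((p.1-p.2)^2+(p.1-p.2):ℤ))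
        = ((w^2)^(2*(p.1+1)) * (q^2)^((p.1+1)^2:ℤ)) * ((1:ℂ)^(2*p.2+1) * (q^2)^(p.2^2+p.2:ℤ)) := by
      intro p
      rw [collect hw hq, sq_zpow, sq_zpow, sq_zpow, prodform hq]
      exact wqform (by ring) (by ring)
    rw [tsum_congr hpt, ← tsum_mul_tsum_of_summable_norm hg0' hh1]
    have : ∑' t : ℤ, (w^2)^(2*(t+1)) * (q^2)^((t+1)^2:ℤ) = th0 (q^2) (w^2) := by
      rw [th0]
      exact (Equiv.addRight (1:ℤ)).tsum_eq (fun t => (w^2)^(2*t) * (q^2)^(t^2:ℤ))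
    rw [this]
    rfl
lemma pow4_zpow (x : ℂ) (a : ℤ) : (x^4)^a = x^(4*a) := by
  rw [← zpow_natCast x 4, ← zpow_mul]; norm_num

lemma even_odd (s : ℂ) (hs : s ≠ 0) (hs1 : ‖s‖ < 1) :
    th0 s 1 = th0 (s^4) 1 + s * th1 (s^4) 1 := by
  have hf : Summable (fun n : ℤ => (1:ℂ)^(2*n) * s^(n^2:ℤ)) := by
    simpa using summable_int s 1 hs hs1 one_ne_zero 0 0 0
  rw [th0, split_even_odd _ hf]
  congr 1
  · apply tsum_congr
    intro k
    rw [one_zpow, one_zpow, one_mul, one_mul, pow4_zpow]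
    congr 1; ring
  · rw [th1, ← tsum_mul_left]
    apply tsum_congr
    intro k
    rw [one_zpow, one_zpow, one_mul, one_mul, pow4_zpow, ← zpow_one_add₀ hs]
    congr 1; ring

lemma th0_qmul {q w : ℂ} (hq : q ≠ 0) (hw : w ≠ 0) :
    th0 q (q*w) = w^(-2:ℤ) * q^(-1:ℤ) * th0 q w := by
  have hpt : ∀ n : ℤ, (q*w)^(2*n) * q^(n^2:ℤ)
      = w^(-2:ℤ)*q^(-1:ℤ) * (w^(2*(n+1)) * q^((n+1)^2:ℤ)) := by
    intro n
    rw [collect hw hq, mul_zpow, mul_comm (q^(2*n)) (w^(2*n)), mul_assoc, ← zpow_add₀ hq]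
    exact wqform (by ring) (by ring)
  calc th0 q (q*w) = ∑' n:ℤ, (q*w)^(2*n) * q^(n^2:ℤ) := rfl
    _ = ∑' n:ℤ, w^(-2:ℤ)*q^(-1:ℤ) * (w^(2*(n+1)) * q^((n+1)^2:ℤ)) := tsum_congr hpt
    _ = w^(-2:ℤ)*q^(-1:ℤ) * ∑' n:ℤ, (w^(2*(n+1)) * q^((n+1)^2:ℤ)) := tsum_mul_left
    _ = w^(-2:ℤ)*q^(-1:ℤ) * th0 q w := by
        rw [th0]
        congr 1
        exact (Equiv.addRight (1:ℤ)).tsum_eq (fun n => w^(2*n) * q^(n^2:ℤ))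

lemma th1_qmul {q w : ℂ} (hq : q ≠ 0) (hw : w ≠ 0) :
    th1 q (q*w) = w^(-2:ℤ) * q^(-1:ℤ) * th1 q w := by
  have hpt : ∀ n : ℤ, (q*w)^(2*n+1) * q^(n^2+n:ℤ)
      = w^(-2:ℤ)*q^(-1:ℤ) * (w^(2*(n+1)+1) * q^((n+1)^2+(n+1):ℤ)) := by
    intro n
    rw [collect hw hq, mul_zpow, mul_comm (q^(2*n+1)) (w^(2*n+1)), mul_assoc, ← zpow_add₀ hq]
    exact wqform (by ring) (by ring)
  calc th1 q (q*w) = ∑' n:ℤ, (q*w)^(2*n+1) * q^(n^2+n:ℤ) := rfl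
    _ = ∑' n:ℤ, w^(-2:ℤ)*q^(-1:ℤ) * (w^(2*(n+1)+1) * q^((n+1)^2+(n+1):ℤ)) := tsum_congr hpt
    _ = w^(-2:ℤ)*q^(-1:ℤ) * ∑' n:ℤ, (w^(2*(n+1)+1) * q^((n+1)^2+(n+1):ℤ)) := tsum_mul_left
    _ = w^(-2:ℤ)*q^(-1:ℤ) * th1 q w := by
        rw [th1]
        congr 1
        exact (Equiv.addRight (1:ℤ)).tsum_eq (fun n => w^(2*n+1) * q^(n^2+n:ℤ))

lemma zeros_qmul {q w : ℂ} (hq : q ≠ 0) (hw : w ≠ 0) :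
    (th0 q (q*w) = 0 ↔ th0 q w = 0) ∧ (th1 q (q*w) = 0 ↔ th1 q w = 0) := by
  have hfac : w^(-2:ℤ) * q^(-1:ℤ) ≠ 0 :=
    mul_ne_zero (zpow_ne_zero _ hw) (zpow_ne_zero _ hq)
  constructor
  · rw [th0_qmul hq hw, mul_eq_zero]; tauto
  · rw [th1_qmul hq hw, mul_eq_zero]; tauto

lemma zeros_zpow_mul {q w : ℂ} (hq : q ≠ 0) (hw : w ≠ 0)
    (h0 : th0 q w = 0) (h1 : th1 q w = 0) (m : ℤ) :
    th0 q (q^m * w) = 0 ∧ th1 q (q^m * w) = 0 := by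
  induction m using Int.induction_on with
  | zero => simpa using ⟨h0, h1⟩
  | succ k ih =>
      have hne : q^(k:ℤ) * w ≠ 0 := mul_ne_zero (zpow_ne_zero _ hq) hw
      have e : q^((k:ℤ)+1) * w = q * (q^(k:ℤ) * w) := by
        rw [zpow_add₀ hq, zpow_one]; ring
      rw [e]
      exact ⟨((zeros_qmul hq hne).1).mpr ih.1, ((zeros_qmul hq hne).2).mpr ih.2⟩
  | pred k ih =>
      have hne : q^(-(k:ℤ)-1) * w ≠ 0 := mul_ne_zero (zpow_ne_zero _ hq) hw
      have e : q * (q^(-(k:ℤ)-1) * w) = q^(-(k:ℤ)) * w := by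
        rw [show (-(k:ℤ)) = (-(k:ℤ)-1)+1 by ring, zpow_add₀ hq, zpow_one]; ring
      constructor
      · exact ((zeros_qmul hq hne).1).mp (by rw [e]; exact ih.1)
      · exact ((zeros_qmul hq hne).2).mp (by rw [e]; exact ih.2)

lemma annulus_normalize {q w : ℂ} (hq : q ≠ 0) (hq1 : ‖q‖ < 1) (hw : w ≠ 0)
    (h0 : th0 q w = 0) (h1 : th1 q w = 0) :
    ∃ v : ℂ, v ≠ 0 ∧ Real.sqrt ‖q‖ < ‖v‖ ∧ ‖v‖ ≤ (Real.sqrt ‖q‖)⁻¹ ∧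
      th0 q v = 0 ∧ th1 q v = 0 := by
  set r := ‖q‖ with hr
  have hr0 : 0 < r := norm_pos_iff.mpr hq
  have hrne : r ≠ 1 := ne_of_lt hq1
  set t := Real.sqrt r with ht
  have ht0 : 0 < t := Real.sqrt_pos.mpr hr0
  have ht2 : t^2 = r := Real.sq_sqrt hr0.le
  have hx0 : 0 < ‖w‖ := norm_pos_iff.mpr hw
  set L := Real.logb r ((t * ‖w‖)⁻¹) with hL
  set m := ⌈L⌉ with hm
  refine ⟨q^m * w, mul_ne_zero (zpow_ne_zero _ hq) hw, ?_, ?_,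
    (zeros_zpow_mul hq hw h0 h1 m).1, (zeros_zpow_mul hq hw h0 h1 m).2⟩
  · -- t < ‖q^m * w‖
    have hub : (m:ℝ) < L + 1 := by
      have := Int.ceil_lt_add_one L
      exact_mod_cast this
    have h1' : r ^ (m:ℝ) > r ^ (L+1) :=
      Real.rpow_lt_rpow_of_exponent_gt hr0 hq1 hub
    have hval : r ^ (L+1) = t / ‖w‖ := by
      rw [Real.rpow_add hr0, Real.rpow_one, Real.rpow_logb hr0 hrne (by positivity), ← ht2]
      rw [sq, mul_inv, div_eq_mul_inv,
        show t⁻¹*‖w‖⁻¹*(t*t) = (t⁻¹*t)*(t*‖w‖⁻¹) by ring, inv_mul_cancel₀ ht0.ne', one_mul]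
    rw [norm_mul, norm_zpow, ← hr]
    have hcast : r ^ (m:ℝ) = r ^ m := Real.rpow_intCast r m
    have hgt : t / ‖w‖ < r ^ m := by rw [← hcast]; rw [hval] at h1'; exact h1'
    exact (div_lt_iff₀ hx0).mp hgt
  · -- ‖q^m * w‖ ≤ t⁻¹
    have hlb : L ≤ (m:ℝ) := Int.le_ceil L
    have h1' : r ^ (m:ℝ) ≤ r ^ L :=
      Real.rpow_le_rpow_of_exponent_ge hr0 hq1.le hlb
    have hval : r ^ L = (t * ‖w‖)⁻¹ := Real.rpow_logb hr0 hrne (by positivity)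
    rw [norm_mul, norm_zpow, ← hr]
    have hcast : r ^ (m:ℝ) = r ^ m := Real.rpow_intCast r m
    have hle : (r:ℝ) ^ m ≤ (t * ‖w‖)⁻¹ := by rw [← hcast]; rw [hval] at h1'; exact h1'
    calc r ^ m * ‖w‖ ≤ (t * ‖w‖)⁻¹ * ‖w‖ := by
          apply mul_le_mul_of_nonneg_right hle hx0.le
      _ = t⁻¹ := by
          rw [mul_inv, mul_assoc, inv_mul_cancel₀ hx0.ne', mul_one]
lemma tsum_norm_le_geom {f : ℕ → ℂ} {c ρ : ℝ} (hρ0 : 0 ≤ ρ) (hρ1 : ρ < 1)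
    (hfn : Summable (fun k => ‖f k‖))
    (hb : ∀ k, ‖f k‖ ≤ c * ρ^k) : ‖∑' k, f k‖ ≤ c / (1 - ρ) := by
  calc ‖∑' k, f k‖ ≤ ∑' k, ‖f k‖ := norm_tsum_le_tsum_norm hfn
    _ ≤ ∑' k:ℕ, c * ρ^k :=
        Summable.tsum_le_tsum hb hfn ((summable_geometric_of_lt_one hρ0 hρ1).mul_left c)
    _ = c * (1-ρ)⁻¹ := by rw [tsum_mul_left, tsum_geometric_of_lt_one hρ0 hρ1]
    _ = c / (1-ρ) := (div_eq_mul_inv _ _).symm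

lemma zpow_norm_nat (x : ℂ) (e : ℤ) (m : ℕ) (h : e = (m:ℤ)) : ‖x ^ e‖ = ‖x‖ ^ m := by
  rw [norm_zpow, h, zpow_natCast]

lemma zpow_norm_neg_nat (x : ℂ) (e : ℤ) (m : ℕ) (h : e = -(m:ℤ)) : ‖x ^ e‖ = ‖x‖⁻¹ ^ m := by
  rw [norm_zpow, h, zpow_neg, ← inv_zpow, zpow_natCast]

/-- lower bound for `a(p) = th0 p 1`. -/
lemma a_lower {p : ℂ} (hp : p ≠ 0) (hp1 : ‖p‖ ≤ 1/8) : 1/2 ≤ ‖th0 p 1‖ := by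
  set r := ‖p‖ with hrdef
  have hr0 : 0 < r := norm_pos_iff.mpr hp
  have hr1 : r < 1 := lt_of_le_of_lt hp1 (by norm_num)
  set f : ℤ → ℂ := fun n => (1:ℂ)^(2*n) * p^(n^2:ℤ) with hf
  have hfn : Summable (fun n:ℤ => ‖f n‖) := by
    simpa [hf] using summable_norm_int p 1 hp hr1 one_ne_zero 0 0 0
  have hpos : Summable (fun k:ℕ => f k) :=
    (hfn.comp_injective Nat.cast_injective).of_norm
  have hneg : Summable (fun k:ℕ => f (-(k+1))) :=
    (hfn.comp_injective (fun a b h => by simpa using h : Function.Injective (fun k:ℕ => -((k:ℤ)+1)))).of_norm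
  have hsplit : th0 p 1 = f 0 + (∑' k:ℕ, f (k+1)) + ∑' k:ℕ, f (-(k+1)) := by
    calc th0 p 1 = ∑' n:ℤ, f n := rfl
      _ = (∑' k:ℕ, f k) + ∑' k:ℕ, f (-(k+1)) := tsum_of_nat_of_neg_add_one hpos hneg
      _ = (f 0 + ∑' k:ℕ, f (k+1)) + ∑' k:ℕ, f (-(k+1)) := by
          rw [Summable.tsum_eq_zero_add hpos]
          norm_num
      _ = f 0 + (∑' k:ℕ, f (k+1)) + ∑' k:ℕ, f (-(k+1)) := by ring
  have hf0 : f 0 = 1 := by simp [hf]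
  have hposbound : ‖∑' k:ℕ, f (k+1)‖ ≤ r / (1 - r) := by
    apply tsum_norm_le_geom hr0.le hr1
    · exact hfn.comp_injective (fun a b h => by simpa using h : Function.Injective (fun k:ℕ => ((k:ℤ)+1)))
    · intro k
      have : ‖f ((k:ℕ)+1)‖ = r ^ ((k+1)^2) := by
        simp only [hf, norm_mul, one_zpow, norm_one, one_mul]
        exact zpow_norm_nat p _ _ (by push_cast; ring)
      rw [this]
      calc r ^ ((k+1)^2) ≤ r ^ (k+1) :=
            pow_le_pow_of_le_one hr0.le hr1.le (Nat.le_self_pow two_ne_zero _)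
        _ = r * r^k := by rw [pow_succ]; ring
  have hnegbound : ‖∑' k:ℕ, f (-(k+1))‖ ≤ r / (1 - r) := by
    apply tsum_norm_le_geom hr0.le hr1
    · exact hfn.comp_injective (fun a b h => by simpa using h : Function.Injective (fun k:ℕ => -((k:ℤ)+1)))
    · intro k
      have : ‖f (-((k:ℕ)+1))‖ = r ^ ((k+1)^2) := by
        simp only [hf, norm_mul, one_zpow, norm_one, one_mul]
        exact zpow_norm_nat p _ _ (by push_cast; ring)
      rw [this]
      calc r ^ ((k+1)^2) ≤ r ^ (k+1) :=
            pow_le_pow_of_le_one hr0.le hr1.le (Nat.le_self_pow two_ne_zero _)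
        _ = r * r^k := by rw [pow_succ]; ring
  have hgeom : r / (1 - r) ≤ 1/7 := by
    rw [div_le_iff₀ (by nlinarith)]
    nlinarith
  have htri : ‖(1:ℂ)‖ ≤ ‖th0 p 1‖ + ‖∑' k:ℕ, f (k+1)‖ + ‖∑' k:ℕ, f (-(k+1))‖ := by
    have h1 : (1:ℂ) = th0 p 1 - (∑' k:ℕ, f (k+1)) - ∑' k:ℕ, f (-(k+1)) := by
      rw [hsplit, hf0]; ring
    have h2 : ‖(1:ℂ)‖ = ‖th0 p 1 - (∑' k:ℕ, f (k+1)) - ∑' k:ℕ, f (-(k+1))‖ := by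
      conv_lhs => rw [h1]
    rw [h2]
    calc ‖th0 p 1 - (∑' k:ℕ, f (k+1)) - ∑' k:ℕ, f (-(k+1))‖
        ≤ ‖th0 p 1 - (∑' k:ℕ, f (k+1))‖ + ‖∑' k:ℕ, f (-(k+1))‖ := norm_sub_le _ _
      _ ≤ ‖th0 p 1‖ + ‖∑' k:ℕ, f (k+1)‖ + ‖∑' k:ℕ, f (-(k+1))‖ := by
          have := norm_sub_le (th0 p 1) (∑' k:ℕ, f (k+1))
          linarith
  rw [norm_one] at htri
  linarith

/-- upper bound for `b(p) = th1 p 1`. -/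
lemma b_upper {p : ℂ} (hp : p ≠ 0) (hp1 : ‖p‖ ≤ 1/2) : ‖th1 p 1‖ ≤ 4 := by
  set r := ‖p‖ with hrdef
  have hr0 : 0 < r := norm_pos_iff.mpr hp
  have hr1 : r < 1 := lt_of_le_of_lt hp1 (by norm_num)
  set f : ℤ → ℂ := fun n => (1:ℂ)^(2*n+1) * p^(n^2+n:ℤ) with hf
  have hfn : Summable (fun n:ℤ => ‖f n‖) := by
    simpa [hf] using summable_norm_int p 1 hp hr1 one_ne_zero 1 1 0
  have hpos : Summable (fun k:ℕ => f k) :=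
    (hfn.comp_injective Nat.cast_injective).of_norm
  have hneg : Summable (fun k:ℕ => f (-(k+1))) :=
    (hfn.comp_injective (fun a b h => by simpa using h : Function.Injective (fun k:ℕ => -((k:ℤ)+1)))).of_norm
  have hsplit : th1 p 1 = (∑' k:ℕ, f k) + ∑' k:ℕ, f (-(k+1)) :=
    tsum_of_nat_of_neg_add_one hpos hneg
  have hposbound : ‖∑' k:ℕ, f k‖ ≤ 1 / (1 - r) := by
    apply tsum_norm_le_geom hr0.le hr1
    · exact hfn.comp_injective Nat.cast_injective
    · intro k
      have : ‖f (k:ℕ)‖ = r ^ (k^2+k) := by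
        simp only [hf, norm_mul, one_zpow, norm_one, one_mul]
        exact zpow_norm_nat p _ _ (by push_cast; ring)
      rw [this, one_mul]
      exact pow_le_pow_of_le_one hr0.le hr1.le (by nlinarith [k.zero_le])
  have hnegbound : ‖∑' k:ℕ, f (-(k+1))‖ ≤ 1 / (1 - r) := by
    apply tsum_norm_le_geom hr0.le hr1
    · exact hfn.comp_injective (fun a b h => by simpa using h : Function.Injective (fun k:ℕ => -((k:ℤ)+1)))
    · intro k
      have : ‖f (-((k:ℕ)+1))‖ = r ^ (k^2+k) := by
        simp only [hf, norm_mul, one_zpow, norm_one, one_mul]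
        exact zpow_norm_nat p _ _ (by push_cast; ring)
      rw [this, one_mul]
      exact pow_le_pow_of_le_one hr0.le hr1.le (by nlinarith [k.zero_le])
  have hgeom : 1 / (1 - r) ≤ 2 := by
    rw [div_le_iff₀ (by nlinarith)]
    nlinarith
  calc ‖th1 p 1‖ ≤ ‖∑' k:ℕ, f k‖ + ‖∑' k:ℕ, f (-(k+1))‖ := by
        rw [hsplit]; exact norm_add_le _ _
    _ ≤ 4 := by linarith
/-- From `th1 q w = 0` on the annulus, `‖w‖` must be in `[1/2, 2]`. -/
lemma stepA {q w : ℂ} (hq : q ≠ 0) (hq16 : ‖q‖ ≤ 1/16) (hw : w ≠ 0)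
    (hlo : Real.sqrt ‖q‖ < ‖w‖) (hhi : ‖w‖ ≤ (Real.sqrt ‖q‖)⁻¹) (h1 : th1 q w = 0) :
    1/2 ≤ ‖w‖ ∧ ‖w‖ ≤ 2 := by
  set r := ‖q‖ with hrdef
  have hr0 : 0 < r := norm_pos_iff.mpr hq
  have hr1 : r < 1 := lt_of_le_of_lt hq16 (by norm_num)
  set t := Real.sqrt r with ht
  have ht0 : 0 < t := Real.sqrt_pos.mpr hr0
  have ht2 : t^2 = r := Real.sq_sqrt hr0.le
  have ht14 : t ≤ 1/4 := by
    nlinarith [ht2, ht0]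
  have hwpos : 0 < ‖w‖ := norm_pos_iff.mpr hw
  have hwinv : ‖w‖⁻¹ < t⁻¹ := by
    apply inv_strictAnti₀ ht0 hlo
  have hwle : ‖w‖ ≤ t⁻¹ := hhi
  set f : ℤ → ℂ := fun n => w^(2*n+1) * q^(n^2+n:ℤ) with hf
  have hfn : Summable (fun n:ℤ => ‖f n‖) := by
    simpa [hf] using summable_norm_int q w hq hr1 hw 1 1 0
  have hpos : Summable (fun k:ℕ => f k) :=
    (hfn.comp_injective Nat.cast_injective).of_norm
  have hneg : Summable (fun k:ℕ => f (-(k+1))) :=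
    (hfn.comp_injective (fun a b h => by simpa using h :
      Function.Injective (fun k:ℕ => -((k:ℤ)+1)))).of_norm
  have hneg2 : Summable (fun k:ℕ => f (-(k+1)-1)) :=
    (hfn.comp_injective (fun a b h => by simpa using h :
      Function.Injective (fun k:ℕ => -((k:ℤ)+1)-1))).of_norm
  have hsplit : (0:ℂ) = f 0 + (∑' k:ℕ, f (k+1)) + (f (-1) + ∑' k:ℕ, f (-(k+1)-1)) := by
    calc (0:ℂ) = th1 q w := h1.symm
      _ = ∑' n:ℤ, f n := rfl
      _ = (∑' k:ℕ, f k) + ∑' k:ℕ, f (-(k+1)) := tsum_of_nat_of_neg_add_one hpos hneg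
      _ = (f 0 + ∑' k:ℕ, f (k+1)) + ∑' k:ℕ, f (-(k+1)) := by
          rw [Summable.tsum_eq_zero_add hpos]
          norm_num
      _ = (f 0 + ∑' k:ℕ, f (k+1)) + (f (-1) + ∑' k:ℕ, f (-(k+1)-1)) := by
          congr 1
          rw [Summable.tsum_eq_zero_add hneg]
          refine congrArg₂ (· + ·) ?_ (tsum_congr (fun b => congrArg f (by push_cast; ring)))
          norm_num
      _ = _ := by ring
  have hf0 : f 0 = w := by simp [hf]
  have hfm1 : f (-1) = w⁻¹ := by
    rw [hf]
    simp only []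
    norm_num [zpow_neg_one]
  -- term bound for both tails: ‖f e‖ ≤ t * (t^2)^k
  have hbound : ∀ (k : ℕ) (e : ℤ), (e = (k:ℤ)+1 ∨ e = -((k:ℤ)+1)-1) → ‖f e‖ ≤ t * (t^2)^k := by
    intro k e he
    have hwnorm : ‖w^(2*e+1)‖ ≤ (t⁻¹)^(2*k+3) := by
      rcases he with rfl | rfl
      · rw [zpow_norm_nat w _ (2*k+3) (by push_cast; ring)]
        exact pow_le_pow_left₀ hwpos.le hwle _
      · rw [zpow_norm_neg_nat w _ (2*k+3) (by push_cast; ring)]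
        exact pow_le_pow_left₀ (by positivity) hwinv.le _
    have hqnorm : ‖q^(e^2+e:ℤ)‖ = r^(k^2+3*k+2) := by
      rcases he with rfl | rfl <;>
        exact zpow_norm_nat q _ _ (by push_cast; ring)
    have : ‖f e‖ ≤ (t⁻¹)^(2*k+3) * r^(k^2+3*k+2) := by
      rw [hf]
      simp only []
      rw [norm_mul, hqnorm]
      exact mul_le_mul_of_nonneg_right hwnorm (by positivity)
    refine this.trans ?_
    -- (t⁻¹)^(2k+3) * r^(k²+3k+2) = t^(2k²+4k+1) ≤ t^(2k+1) = t * (t²)^k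
    have e1 : r^(k^2+3*k+2) = t^(2*k^2+6*k+4) := by
      rw [← ht2, ← pow_mul]
      congr 1
      ring
    have e2 : (t⁻¹)^(2*k+3) * t^(2*k^2+6*k+4) = t^(2*k^2+4*k+1) := by
      rw [inv_pow, inv_mul_eq_div, eq_comm, eq_div_iff (by positivity), ← pow_add]
      congr 1
      ring
    rw [e1, e2]
    have hexp : 2*k+1 ≤ 2*k^2+4*k+1 := by nlinarith [sq_nonneg k, k.zero_le]
    have ht1 : t ≤ 1 := by linarith
    calc t^(2*k^2+4*k+1) ≤ t^(2*k+1) := pow_le_pow_of_le_one ht0.le ht1 hexp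
      _ = t * (t^2)^k := by
          rw [← pow_mul, ← pow_succ']
  have hS1 : ‖∑' k:ℕ, f (k+1)‖ ≤ t / (1 - t^2) := by
    apply tsum_norm_le_geom (by positivity) (by nlinarith)
    · exact hfn.comp_injective (fun a b h => by simpa using h :
        Function.Injective (fun k:ℕ => ((k:ℤ)+1)))
    · intro k
      exact hbound k _ (Or.inl (by push_cast; ring))
  have hS2 : ‖∑' k:ℕ, f (-(k+1)-1)‖ ≤ t / (1 - t^2) := by
    apply tsum_norm_le_geom (by positivity) (by nlinarith)
    · exact hfn.comp_injective (fun a b h => by simpa using h :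
        Function.Injective (fun k:ℕ => -((k:ℤ)+1)-1))
    · intro k
      exact hbound k _ (Or.inr (by push_cast; ring))
  have hgeom : t / (1 - t^2) ≤ 4/15 := by
    rw [div_le_iff₀ (by nlinarith)]
    nlinarith
  have hkey : ‖w + w⁻¹‖ ≤ 8/15 := by
    have h1' : w + w⁻¹ = -((∑' k:ℕ, f (k+1)) + ∑' k:ℕ, f (-(k+1)-1)) := by
      have hs := hsplit
      rw [hf0, hfm1] at hs
      linear_combination -hs
    rw [h1', norm_neg]
    calc ‖(∑' k:ℕ, f (k+1)) + ∑' k:ℕ, f (-(k+1)-1)‖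
        ≤ ‖∑' k:ℕ, f (k+1)‖ + ‖∑' k:ℕ, f (-(k+1)-1)‖ := norm_add_le _ _
      _ ≤ 8/15 := by linarith
  have hinv : ‖w‖⁻¹ * ‖w‖ = 1 := inv_mul_cancel₀ hwpos.ne'
  have htri1 : ‖w‖ - ‖w‖⁻¹ ≤ ‖w + w⁻¹‖ := by
    have : ‖w‖ ≤ ‖w + w⁻¹‖ + ‖w⁻¹‖ := by
      calc ‖w‖ = ‖(w + w⁻¹) - w⁻¹‖ := by rw [add_sub_cancel_right]
        _ ≤ ‖w + w⁻¹‖ + ‖w⁻¹‖ := norm_sub_le _ _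
    rw [norm_inv] at this
    linarith
  have htri2 : ‖w‖⁻¹ - ‖w‖ ≤ ‖w + w⁻¹‖ := by
    have : ‖w⁻¹‖ ≤ ‖w + w⁻¹‖ + ‖w‖ := by
      calc ‖w⁻¹‖ = ‖(w + w⁻¹) - w‖ := by rw [add_sub_cancel_left]
        _ ≤ ‖w + w⁻¹‖ + ‖w‖ := norm_sub_le _ _
    rw [norm_inv] at this
    linarith
  constructor
  · nlinarith [htri2, hkey, hinv, hwpos]
  · nlinarith [htri1, hkey, hinv, hwpos]

/-- `th0 q w ≠ 0` for small `q` and moderate `w`. -/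
lemma stepB {q w : ℂ} (hq : q ≠ 0) (hq16 : ‖q‖ ≤ 1/16) (hw : w ≠ 0)
    (hlo : 1/2 ≤ ‖w‖) (hhi : ‖w‖ ≤ 2) : th0 q w ≠ 0 := by
  intro h0
  set r := ‖q‖ with hrdef
  have hr0 : 0 < r := norm_pos_iff.mpr hq
  have hr1 : r < 1 := lt_of_le_of_lt hq16 (by norm_num)
  have hwpos : 0 < ‖w‖ := norm_pos_iff.mpr hw
  have hinv : ‖w‖⁻¹ * ‖w‖ = 1 := inv_mul_cancel₀ hwpos.ne'
  have hwinv : ‖w‖⁻¹ ≤ 2 := by nlinarith [inv_nonneg.mpr hwpos.le]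
  set f : ℤ → ℂ := fun n => w^(2*n) * q^(n^2:ℤ) with hf
  have hfn : Summable (fun n:ℤ => ‖f n‖) := by
    simpa [hf] using summable_norm_int q w hq hr1 hw 0 0 0
  have hpos : Summable (fun k:ℕ => f k) :=
    (hfn.comp_injective Nat.cast_injective).of_norm
  have hneg : Summable (fun k:ℕ => f (-(k+1))) :=
    (hfn.comp_injective (fun a b h => by simpa using h :
      Function.Injective (fun k:ℕ => -((k:ℤ)+1)))).of_norm
  have hsplit : (0:ℂ) = f 0 + (∑' k:ℕ, f (k+1)) + ∑' k:ℕ, f (-(k+1)) := by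
    calc (0:ℂ) = th0 q w := h0.symm
      _ = ∑' n:ℤ, f n := rfl
      _ = (∑' k:ℕ, f k) + ∑' k:ℕ, f (-(k+1)) := tsum_of_nat_of_neg_add_one hpos hneg
      _ = (f 0 + ∑' k:ℕ, f (k+1)) + ∑' k:ℕ, f (-(k+1)) := by
          rw [Summable.tsum_eq_zero_add hpos]
          norm_num
      _ = _ := by ring
  have hf0 : f 0 = 1 := by simp [hf]
  have hbound : ∀ (k : ℕ) (e : ℤ), (e = (k:ℤ)+1 ∨ e = -((k:ℤ)+1)) → ‖f e‖ ≤ (4*r) * (4*r)^k := by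
    intro k e he
    have hwnorm : ‖w^(2*e)‖ ≤ 2^(2*k+2) := by
      rcases he with rfl | rfl
      · rw [zpow_norm_nat w _ (2*k+2) (by push_cast; ring)]
        exact pow_le_pow_left₀ hwpos.le hhi _
      · rw [zpow_norm_neg_nat w _ (2*k+2) (by push_cast; ring)]
        exact pow_le_pow_left₀ (by positivity) hwinv _
    have hqnorm : ‖q^(e^2:ℤ)‖ = r^((k+1)^2) := by
      rcases he with rfl | rfl <;>
        exact zpow_norm_nat q _ _ (by push_cast; ring)
    have hfe : ‖f e‖ ≤ 2^(2*k+2) * r^((k+1)^2) := by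
      rw [hf]
      simp only []
      rw [norm_mul, hqnorm]
      exact mul_le_mul_of_nonneg_right hwnorm (by positivity)
    refine hfe.trans ?_
    calc (2:ℝ)^(2*k+2) * r^((k+1)^2) ≤ 2^(2*k+2) * r^(k+1) := by
          apply mul_le_mul_of_nonneg_left
            (pow_le_pow_of_le_one hr0.le hr1.le (Nat.le_self_pow two_ne_zero _)) (by positivity)
      _ = (4*r) * (4*r)^k := by
          rw [show 2*k+2 = 2*(k+1) from by ring, pow_mul, mul_pow]
          norm_num
          rw [pow_succ]
          ring
  have hS1 : ‖∑' k:ℕ, f (k+1)‖ ≤ (4*r) / (1 - 4*r) := by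
    apply tsum_norm_le_geom (by positivity) (by nlinarith)
    · exact hfn.comp_injective (fun a b h => by simpa using h :
        Function.Injective (fun k:ℕ => ((k:ℤ)+1)))
    · intro k
      exact hbound k _ (Or.inl (by push_cast; ring))
  have hS2 : ‖∑' k:ℕ, f (-(k+1))‖ ≤ (4*r) / (1 - 4*r) := by
    apply tsum_norm_le_geom (by positivity) (by nlinarith)
    · exact hfn.comp_injective (fun a b h => by simpa using h :
        Function.Injective (fun k:ℕ => -((k:ℤ)+1)))
    · intro k
      exact hbound k _ (Or.inr (by push_cast; ring))
  have hgeom : (4*r) / (1 - 4*r) ≤ 1/3 := by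
    rw [div_le_iff₀ (by nlinarith)]
    nlinarith
  have h1' : (1:ℂ) = -((∑' k:ℕ, f (k+1)) + ∑' k:ℕ, f (-(k+1))) := by
    rw [← hf0]
    linear_combination -hsplit
  have : (1:ℝ) ≤ 2/3 := by
    calc (1:ℝ) = ‖(1:ℂ)‖ := by norm_num
      _ = ‖(∑' k:ℕ, f (k+1)) + ∑' k:ℕ, f (-(k+1))‖ := by rw [h1', norm_neg]
      _ ≤ ‖∑' k:ℕ, f (k+1)‖ + ‖∑' k:ℕ, f (-(k+1))‖ := norm_add_le _ _
      _ ≤ 2/3 := by linarith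
  norm_num at this
lemma a_ne_zero {s : ℂ} (hs : s ≠ 0) (hs1 : ‖s‖ < 1) : th0 s 1 ≠ 0 := by
  intro h
  have key : ∀ k : ℕ, ∃ c : ℂ, c^2 = s^(2^(k+1)) ∧
      th0 (s^(2^(k+1))) 1 ^ 2 = c * th1 (s^(2^(k+1))) 1 ^ 2 := by
    intro k
    induction k with
    | zero =>
        refine ⟨-s, by rw [pow_one]; ring, ?_⟩
        have hd := doubling0 hs hs1 one_ne_zero (q := s) (w := 1)
        rw [one_pow, h] at hd
        norm_num at hd
        rw [show (2:ℕ)^(0+1) = 2 by norm_num]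
        linear_combination -hd
    | succ k ih =>
        obtain ⟨c, hc2, hQ⟩ := ih
        set p := s^(2^(k+1)) with hp
        have hpne : p ≠ 0 := pow_ne_zero _ hs
        have hp1 : ‖p‖ < 1 := by
          rw [hp, norm_pow]
          exact pow_lt_one₀ (norm_nonneg s) hs1 (by positivity)
        have hd0 := doubling0 hpne hp1 one_ne_zero (q := p) (w := 1)
        have hd1 := doubling1 hpne hp1 one_ne_zero (q := p) (w := 1)
        rw [one_pow] at hd0 hd1
        have hXY : (th0 (p^2) 1 - c * th1 (p^2) 1)^2 = 0 := by
          linear_combination -hd0 + hQ + c * hd1 + (th1 (p^2) 1)^2 * hc2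
        have hX : th0 (p^2) 1 = c * th1 (p^2) 1 :=
          sub_eq_zero.mp ((pow_eq_zero_iff two_ne_zero).mp hXY)
        have hbase : s^(2^(k+1+1)) = p^2 := by rw [hp, ← pow_mul, pow_succ]
        refine ⟨p, by rw [hbase], ?_⟩
        rw [hbase, hX]
        linear_combination (th1 (p^2) 1)^2 * hc2
  obtain ⟨k, hk⟩ : ∃ k : ℕ, ‖s‖^(2^k) < 1/100 := by
    obtain ⟨m, hm⟩ := exists_pow_lt_of_lt_one (by norm_num : (0:ℝ) < 1/100) hs1
    refine ⟨m, lt_of_le_of_lt ?_ hm⟩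
    exact pow_le_pow_of_le_one (norm_nonneg s) hs1.le (Nat.lt_two_pow_self (n := m)).le
  obtain ⟨c, hc2, hQ⟩ := key k
  set p := s^(2^(k+1)) with hp
  have hpne : p ≠ 0 := pow_ne_zero _ hs
  have hx0 : (0:ℝ) ≤ ‖s‖^(2^k) := by positivity
  have hpnorm : ‖p‖ = (‖s‖^(2^k))^2 := by
    rw [hp, norm_pow, pow_succ, pow_mul]
  have hcnorm : ‖c‖ = ‖s‖^(2^k) := by
    have h2 : ‖c‖^2 = (‖s‖^(2^k))^2 := by
      rw [← norm_pow, hc2]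
      exact hpnorm
    rw [← Real.sqrt_sq (norm_nonneg c), h2, Real.sqrt_sq hx0]
  have hp8 : ‖p‖ ≤ 1/8 := by rw [hpnorm]; nlinarith
  have hA := a_lower hpne hp8
  have hB := b_upper hpne (le_trans hp8 (by norm_num))
  have hnorms : ‖th0 p 1‖^2 = ‖c‖ * ‖th1 p 1‖^2 := by
    rw [← norm_pow, ← norm_pow, ← norm_mul, hQ]
  nlinarith [norm_nonneg (th1 p 1), norm_nonneg (th0 p 1)]

lemma descent {q w : ℂ} (hq : q ≠ 0) (hq1 : ‖q‖ < 1) (hw : w ≠ 0)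
    (h0 : th0 q w = 0) (h1 : th1 q w = 0) :
    th0 (q^2) (w^2) = 0 ∧ th1 (q^2) (w^2) = 0 := by
  obtain ⟨s, hs2⟩ : ∃ s : ℂ, s^2 = q :=
    ⟨q^((1:ℂ)/2), by rw [sq, ← Complex.cpow_add _ _ hq]; norm_num⟩
  have hs0 : s ≠ 0 := by
    intro hh
    rw [hh] at hs2
    simp at hs2
    exact hq hs2.symm
  have hs1 : ‖s‖ < 1 := by
    by_contra hcon
    push_neg at hcon
    have : (1:ℝ) ≤ ‖q‖ := by
      rw [← hs2, norm_pow]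
      nlinarith
    linarith
  have hAs := a_ne_zero hs0 hs1
  have hAns := a_ne_zero (neg_ne_zero.mpr hs0) (by rwa [norm_neg])
  have hs4 : s^4 = q^2 := by rw [← hs2]; ring
  have heo1 : th0 s 1 = th0 (q^2) 1 + s * th1 (q^2) 1 := by
    rw [← hs4]; exact even_odd s hs0 hs1
  have heo2 : th0 (-s) 1 = th0 (q^2) 1 - s * th1 (q^2) 1 := by
    have h := even_odd (-s) (neg_ne_zero.mpr hs0) (by rwa [norm_neg])
    rw [show (-s)^4 = q^2 by rw [← hs2]; ring] at h
    rw [h]; ring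
  have hd0 := doubling0 hq hq1 hw
  have hd1 := doubling1 hq hq1 hw
  rw [h0] at hd0
  rw [h1] at hd1
  norm_num at hd0 hd1
  have hplus : th0 s 1 * (th0 (q^2) (w^2) + s * th1 (q^2) (w^2)) = 0 := by
    rw [heo1]
    linear_combination (-1:ℂ)*hd0 - s*hd1 + (th1 (q^2) (w^2) * th1 (q^2) 1) * hs2
  have hminus : th0 (-s) 1 * (th0 (q^2) (w^2) - s * th1 (q^2) (w^2)) = 0 := by
    rw [heo2]
    linear_combination (-1:ℂ)*hd0 + s*hd1 + (th1 (q^2) (w^2) * th1 (q^2) 1) * hs2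
  have e1 : th0 (q^2) (w^2) + s * th1 (q^2) (w^2) = 0 := by
    rcases mul_eq_zero.mp hplus with hcase | hcase
    · exact absurd hcase hAs
    · exact hcase
  have e2 : th0 (q^2) (w^2) - s * th1 (q^2) (w^2) = 0 := by
    rcases mul_eq_zero.mp hminus with hcase | hcase
    · exact absurd hcase hAns
    · exact hcase
  constructor
  · linear_combination (1/2:ℂ)*e1 + (1/2:ℂ)*e2
  · have hsy : s * th1 (q^2) (w^2) = 0 := by
      linear_combination (1/2:ℂ)*e1 - (1/2:ℂ)*e2
    rcases mul_eq_zero.mp hsy with hcase | hcase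
    · exact absurd hcase hs0
    · exact hcase
def Bad (q : ℂ) : Prop :=
  ∃ w : ℂ, w ≠ 0 ∧ Real.sqrt ‖q‖ < ‖w‖ ∧ ‖w‖ ≤ (Real.sqrt ‖q‖)⁻¹ ∧
    th0 q w = 0 ∧ th1 q w = 0

lemma bad_step {q : ℂ} (hq : q ≠ 0) (hq1 : ‖q‖ < 1) : Bad q → Bad (q^2) := by
  rintro ⟨w, hw, hlo, hhi, h0, h1⟩
  have hr0 : 0 < ‖q‖ := norm_pos_iff.mpr hq
  have hsq : Real.sqrt ‖q^2‖ = ‖q‖ := by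
    rw [norm_pow, Real.sqrt_sq (norm_nonneg q)]
  have ht2 : Real.sqrt ‖q‖ ^ 2 = ‖q‖ := Real.sq_sqrt hr0.le
  have htnn : 0 ≤ Real.sqrt ‖q‖ := Real.sqrt_nonneg _
  refine ⟨w^2, pow_ne_zero _ hw, ?_, ?_, (descent hq hq1 hw h0 h1).1,
    (descent hq hq1 hw h0 h1).2⟩
  · rw [hsq, norm_pow]
    nlinarith
  · rw [hsq, norm_pow]
    have step1 : ‖w‖^2 ≤ ((Real.sqrt ‖q‖)⁻¹)^2 := pow_le_pow_left₀ (norm_nonneg w) hhi 2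
    rwa [inv_pow, ht2] at step1

lemma bad_iter {q : ℂ} (hq : q ≠ 0) (hq1 : ‖q‖ < 1) (hb : Bad q) :
    ∀ k : ℕ, Bad (q^(2^k)) := by
  intro k
  induction k with
  | zero => simpa using hb
  | succ k ih =>
      have hne : q^(2^k) ≠ 0 := pow_ne_zero _ hq
      have hlt : ‖q^(2^k)‖ < 1 := by
        rw [norm_pow]
        exact pow_lt_one₀ (norm_nonneg q) hq1 (by positivity)
      have := bad_step hne hlt ih
      rwa [← pow_mul, ← pow_succ] at this

lemma not_bad {q : ℂ} (hq : q ≠ 0) (hq1 : ‖q‖ < 1) : ¬ Bad q := by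
  intro hb
  obtain ⟨k, hk⟩ : ∃ k : ℕ, ‖q‖^(2^k) ≤ 1/16 := by
    obtain ⟨m, hm⟩ := exists_pow_lt_of_lt_one (by norm_num : (0:ℝ) < 1/16) hq1
    exact ⟨m, (pow_le_pow_of_le_one (norm_nonneg q) hq1.le (Nat.lt_two_pow_self (n := m)).le).trans hm.le⟩
  obtain ⟨w, hw, hlo, hhi, h0, h1⟩ := bad_iter hq hq1 hb k
  have hne : q^(2^k) ≠ 0 := pow_ne_zero _ hq
  have hnorm : ‖q^(2^k)‖ = ‖q‖^(2^k) := norm_pow _ _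
  have h16 : ‖q^(2^k)‖ ≤ 1/16 := by rw [hnorm]; exact hk
  obtain ⟨hwlo, hwhi⟩ := stepA hne h16 hw hlo hhi h1
  exact stepB hne h16 hw hwlo hwhi h0
lemma theta0_eq (q w : ℂ) : theta0 q w = th0 q w := by
  apply tsum_congr
  intro n
  rw [show ((n : ℂ)^2) = ((n^2 : ℤ) : ℂ) by push_cast; ring, Complex.cpow_intCast]

lemma theta1_eq (q w : ℂ) (hq : q ≠ 0) : theta1 q w = q^((1:ℂ)/4) * th1 q w := by
  have hpt : ∀ n : ℤ, w ^ (2*n+1) * q ^ (((n : ℂ) + 1/2)^2)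
      = q^((1:ℂ)/4) * (w ^ (2*n+1) * q ^ (n^2+n : ℤ)) := by
    intro n
    rw [show (((n : ℂ) + 1/2)^2) = (1:ℂ)/4 + ((n^2+n : ℤ) : ℂ) by push_cast; ring,
      Complex.cpow_add _ _ hq, Complex.cpow_intCast]
    ring
  rw [theta1, th1, tsum_congr hpt, tsum_mul_left]

/-- `θ⁰` and `θ¹` have no common zero: there is no `w ≠ 0` with
`θ⁰(w) = 0` and `θ¹(w) = 0`. -/
theorem theta_no_common_zero (q : ℂ) (hq0 : 0 < ‖q‖)
    (hq1 : ‖q‖ < 1) :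
    ¬ ∃ w : ℂ, w ≠ 0 ∧ theta0 q w = 0 ∧ theta1 q w = 0 := by
  rintro ⟨w, hw, h0, h1⟩
  have hq : q ≠ 0 := by
    intro h
    rw [h] at hq0
    simp at hq0
  have hqn1 : ‖q‖ < 1 := hq1
  have h0' : th0 q w = 0 := by rw [← theta0_eq]; exact h0
  have h1' : th1 q w = 0 := by
    have := theta1_eq q w hq
    rw [h1] at this
    have hc : q^((1:ℂ)/4) ≠ 0 := by
      intro hc
      rcases (Complex.cpow_eq_zero_iff q ((1:ℂ)/4)).mp hc with ⟨h', _⟩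
      exact hq h'
    rcases mul_eq_zero.mp this.symm with hcase | hcase
    · exact absurd hcase hc
    · exact hcase
  obtain ⟨v, hv, hvlo, hvhi, hv0, hv1⟩ := annulus_normalize hq hqn1 hw h0' h1'
  exact not_bad hq hqn1 ⟨v, hv, hvlo, hvhi, hv0, hv1⟩
end

section
/- For every (σ⁰, σ¹) ∈ ℂ² with (σ⁰, σ¹) ≠ (0, 0), there exists w ∈ ℂ with w ≠ 0 such that σ⁰ θ⁰(w) + σ¹ θ¹(w) = 0. -/
open Complex Filter intervalIntegral


private lemma theta_master {t : ℝ} (ht0 : 0 < t) (ht1 : t < 1) (R : ℝ) :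
    Summable (fun m : ℤ => Real.exp (R * |(m : ℝ)|) * t ^ (((m : ℝ) / 2) ^ 2)) := by
  have key : Summable (fun n : ℕ => Real.exp (R * n) * t ^ (((n : ℝ) / 2) ^ 2)) := by
    apply summable_of_ratio_norm_eventually_le (r := 1/2) (by norm_num)
    have h1 : Tendsto (fun n : ℕ => Real.exp R * (t ^ ((1:ℝ)/2)) ^ n * t ^ ((1:ℝ)/4))
        atTop (nhds 0) := by
      have h0 : Tendsto (fun n : ℕ => (t ^ ((1:ℝ)/2)) ^ n) atTop (nhds 0) :=
        tendsto_pow_atTop_nhds_zero_of_lt_one (Real.rpow_nonneg ht0.le _)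
          (Real.rpow_lt_one ht0.le ht1 (by norm_num))
      simpa using (h0.const_mul (Real.exp R)).mul_const (t ^ ((1:ℝ)/4))
    filter_upwards [h1.eventually_le_const (by norm_num : (0:ℝ) < 1/2)] with n hn
    have hpos : ∀ k : ℕ, (0:ℝ) ≤ Real.exp (R * k) * t ^ (((k : ℝ) / 2) ^ 2) := by
      intro k
      have := Real.rpow_pos_of_pos ht0 (((k : ℝ) / 2) ^ 2)
      positivity
    rw [Real.norm_of_nonneg (hpos (n+1)), Real.norm_of_nonneg (hpos n)]
    push_cast
    have e1 : (((n : ℕ) + 1 : ℝ) / 2) ^ 2 = ((n : ℝ) / 2) ^ 2 + ((1:ℝ)/2 * (n:ℝ) + 1/4) := by ring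
    have e2 : t ^ ((1:ℝ)/2 * (n:ℝ)) = (t ^ ((1:ℝ)/2)) ^ n := by
      rw [Real.rpow_mul ht0.le, Real.rpow_natCast]
    calc Real.exp (R * ((n:ℕ)+1:ℝ)) * t ^ ((((n:ℕ)+1:ℝ)) / 2) ^ 2
        = (Real.exp R * (t ^ ((1:ℝ)/2)) ^ n * t ^ ((1:ℝ)/4)) *
          (Real.exp (R * n) * t ^ (((n : ℝ) / 2) ^ 2)) := by
          rw [e1, Real.rpow_add ht0, Real.rpow_add ht0, ← e2, mul_add, Real.exp_add, mul_one]
          ring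
      _ ≤ 1/2 * (Real.exp (R * n) * t ^ (((n : ℝ) / 2) ^ 2)) :=
          mul_le_mul_of_nonneg_right hn (hpos n)
  have hcast : ∀ n : ℕ, Real.exp (R * n) * t ^ (((n : ℝ) / 2) ^ 2)
      = Real.exp (R * |((n : ℤ) : ℝ)|) * t ^ ((((n : ℤ) : ℝ) / 2) ^ 2) := by
    intro n
    push_cast
    rw [_root_.abs_of_nonneg (by positivity : (0:ℝ) ≤ (n:ℝ))]
  apply Summable.of_nat_of_neg
  · exact key.congr fun n => by rw [hcast n]
  · refine key.congr fun n => ?_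
    rw [hcast n]
    push_cast
    rw [abs_neg, neg_div, neg_sq]

/-- norm of one term of the series -/
private lemma theta_term_bound {q : ℂ} {c : ℤ → ℂ} {S P : ℝ}
    (hc : ∀ m : ℤ, ‖c m‖
      ≤ S * (Real.exp (P * |(m:ℝ)|) * (‖q‖) ^ (((m:ℝ)/2) ^ 2)))
    {R : ℝ} {z : ℂ} (hz : ‖z‖ ≤ R) (m : ℤ) :
    ‖c m * Complex.exp (m * z)‖
      ≤ S * (Real.exp ((P + R) * |(m:ℝ)|) * (‖q‖) ^ (((m:ℝ)/2) ^ 2)) := by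
  have hexp : ‖Complex.exp ((m : ℂ) * z)‖ ≤ Real.exp (R * |(m:ℝ)|) := by
    rw [Complex.norm_exp]
    apply Real.exp_le_exp.mpr
    have h1 : ((m : ℂ) * z).re = (m : ℝ) * z.re := by
      simp [Complex.mul_re]
    rw [h1]
    calc (m : ℝ) * z.re ≤ |(m : ℝ) * z.re| := le_abs_self _
      _ = |(m:ℝ)| * |z.re| := abs_mul _ _
      _ ≤ |(m:ℝ)| * R := by
          apply mul_le_mul_of_nonneg_left _ (abs_nonneg _)
          exact le_trans (Complex.abs_re_le_norm z) hz
      _ = R * |(m:ℝ)| := mul_comm _ _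
  have h0 : ‖c m * Complex.exp ((m:ℂ) * z)‖
      = ‖c m‖ * ‖Complex.exp ((m:ℂ) * z)‖ := by
    simp
  rw [h0]
  calc ‖c m‖ * ‖Complex.exp ((m:ℂ) * z)‖
      ≤ (S * (Real.exp (P * |(m:ℝ)|) * (‖q‖) ^ (((m:ℝ)/2) ^ 2)))
        * Real.exp (R * |(m:ℝ)|) :=
        mul_le_mul (hc m) hexp (norm_nonneg _)
          (le_trans (norm_nonneg _) (hc m))
    _ = S * ((Real.exp (P * |(m:ℝ)|) * Real.exp (R * |(m:ℝ)|))
        * (‖q‖) ^ (((m:ℝ)/2) ^ 2)) := by ring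
    _ = S * (Real.exp ((P + R) * |(m:ℝ)|) * (‖q‖) ^ (((m:ℝ)/2) ^ 2)) := by
        rw [← Real.exp_add]; ring_nf

private lemma theta_summable_s15 {q : ℂ} (hq0 : 0 < ‖q‖) (hq1 : ‖q‖ < 1)
    {c : ℤ → ℂ} {S P : ℝ}
    (hc : ∀ m : ℤ, ‖c m‖
      ≤ S * (Real.exp (P * |(m:ℝ)|) * (‖q‖) ^ (((m:ℝ)/2) ^ 2)))
    (z : ℂ) : Summable (fun m : ℤ => c m * Complex.exp (m * z)) := by
  apply Summable.of_norm
  apply Summable.of_nonneg_of_le (fun m => norm_nonneg _)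
    (fun m => theta_term_bound hc (le_refl (‖z‖)) m)
  exact ((theta_master hq0 hq1 (P + ‖z‖)).mul_left S)

/-- the coefficient multiplied by the frequency still satisfies a bound -/
private lemma theta_freq_bound {q : ℂ} {c : ℤ → ℂ} {S P : ℝ} (hS : 0 ≤ S)
    (hc : ∀ m : ℤ, ‖c m‖
      ≤ S * (Real.exp (P * |(m:ℝ)|) * (‖q‖) ^ (((m:ℝ)/2) ^ 2))) :
    ∀ m : ℤ, ‖(m : ℂ) * c m‖
      ≤ S * (Real.exp ((P + 1) * |(m:ℝ)|) * (‖q‖) ^ (((m:ℝ)/2) ^ 2)) := by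
  intro m
  have h1 : ‖(m:ℂ) * c m‖ = |(m:ℝ)| * ‖c m‖ := by
    rw [norm_mul, Complex.norm_intCast]
  have h2 : |(m:ℝ)| ≤ Real.exp (|(m:ℝ)|) := by
    have := Real.add_one_le_exp (|(m:ℝ)|)
    linarith
  rw [h1]
  calc |(m:ℝ)| * ‖c m‖
      ≤ Real.exp (|(m:ℝ)|) * (S * (Real.exp (P * |(m:ℝ)|)
          * (‖q‖) ^ (((m:ℝ)/2) ^ 2))) :=
        mul_le_mul h2 (hc m) (norm_nonneg _) (Real.exp_nonneg _)
    _ = S * ((Real.exp (|(m:ℝ)|) * Real.exp (P * |(m:ℝ)|))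
          * (‖q‖) ^ (((m:ℝ)/2) ^ 2)) := by ring
    _ = S * (Real.exp ((P + 1) * |(m:ℝ)|) * (‖q‖) ^ (((m:ℝ)/2) ^ 2)) := by
        rw [← Real.exp_add]; ring_nf

private lemma theta_hasDerivAt {q : ℂ} (hq0 : 0 < ‖q‖) (hq1 : ‖q‖ < 1)
    {c : ℤ → ℂ} {S P : ℝ} (hS : 0 ≤ S)
    (hc : ∀ m : ℤ, ‖c m‖
      ≤ S * (Real.exp (P * |(m:ℝ)|) * (‖q‖) ^ (((m:ℝ)/2) ^ 2)))
    (z : ℂ) :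
    HasDerivAt (fun w => ∑' m : ℤ, c m * Complex.exp (m * w))
      (∑' m : ℤ, (m : ℂ) * c m * Complex.exp (m * z)) z := by
  set R : ℝ := ‖z‖ + 1 with hR
  have hzR : z ∈ Metric.ball (0:ℂ) R := by
    simp [hR, Metric.mem_ball, Complex.dist_eq]
  set u : ℤ → ℝ := fun m => S * (Real.exp ((P + 1 + R) * |(m:ℝ)|)
      * (‖q‖) ^ (((m:ℝ)/2) ^ 2)) with hu
  have hus : Summable u := (theta_master hq0 hq1 (P + 1 + R)).mul_left S
  have hderiv : ∀ m : ℤ, ∀ w : ℂ,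
      HasDerivAt (fun w => c m * Complex.exp (m * w)) ((m:ℂ) * c m * Complex.exp (m * w)) w := by
    intro m w
    have h1 : HasDerivAt (fun w : ℂ => (m:ℂ) * w) ((m:ℂ) * 1) w :=
      (hasDerivAt_id w).const_mul (m:ℂ)
    have h2 := (h1.cexp).const_mul (c m)
    rw [show (m:ℂ) * c m * Complex.exp (m * w) = c m * (Complex.exp ((m:ℂ) * w) * ((m:ℂ) * 1)) by ring]
    exact h2
  have hfd : ∀ m : ℤ, ∀ x ∈ Metric.ball (0:ℂ) R,
      HasFDerivAt (fun w => c m * Complex.exp (m * w))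
        (ContinuousLinearMap.smulRight (1 : ℂ →L[ℂ] ℂ) ((m:ℂ) * c m * Complex.exp (m * x))) x := by
    intro m x _
    exact hasDerivAt_iff_hasFDerivAt.mp (hderiv m x)
  have hbound : ∀ m : ℤ, ∀ x ∈ Metric.ball (0:ℂ) R,
      ‖ContinuousLinearMap.smulRight (1 : ℂ →L[ℂ] ℂ) ((m:ℂ) * c m * Complex.exp (m * x))‖ ≤ u m := by
    intro m x hx
    rw [ContinuousLinearMap.norm_smulRight_apply, norm_one, one_mul]
    have hxR : ‖x‖ ≤ R := by
      simp [Complex.dist_eq] at hx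
      linarith
    have := theta_term_bound (q := q) (theta_freq_bound hS hc) hxR m
    calc ‖(m:ℂ) * c m * Complex.exp (m * x)‖ = ‖((m:ℂ) * c m) * Complex.exp (m * x)‖ := by
          ring_nf
      _ ≤ S * (Real.exp ((P + 1 + R) * |(m:ℝ)|) * (‖q‖) ^ (((m:ℝ)/2) ^ 2)) := this
  have hsum0 : Summable (fun m : ℤ => c m * Complex.exp (m * (0:ℂ))) :=
    theta_summable_s15 hq0 hq1 hc 0
  have key := hasFDerivAt_tsum_of_isPreconnected hus Metric.isOpen_ball
    (convex_ball (0:ℂ) R).isPreconnected hfd hbound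
    (Metric.mem_ball_self (by linarith [norm_nonneg z])) hsum0 hzR
  rw [hasDerivAt_iff_hasFDerivAt]
  have hgsum : Summable (fun m : ℤ => (m:ℂ) * c m * Complex.exp (m * z)) := by
    have := theta_summable_s15 hq0 hq1 (theta_freq_bound hS hc) z
    exact this
  refine key.congr_fderiv ?_
  have := (ContinuousLinearMap.smulRightL ℂ ℂ ℂ (1 : ℂ →L[ℂ] ℂ)).map_tsum hgsum
  exact this.symm

/-- unified coefficient: `σ0` for even `m`, `σ1` for odd `m`, times `q^{(m/2)²}`. -/
private noncomputable def tc (q σ0 σ1 : ℂ) (m : ℤ) : ℂ :=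
  (if Even m then σ0 else σ1) * q ^ (((m : ℂ) / 2) ^ 2)

private lemma abs_cpow_half_sq {q : ℂ} (hq : q ≠ 0) (m : ℤ) :
    ‖q ^ (((m : ℂ) / 2) ^ 2)‖ = (‖q‖) ^ (((m : ℝ) / 2) ^ 2) := by
  have h1 : (((m : ℂ) / 2) ^ 2) = (((((m : ℝ) / 2) ^ 2 : ℝ)) : ℂ) := by push_cast; ring
  rw [h1, Complex.norm_cpow_of_ne_zero hq]
  simp only [Complex.ofReal_re, Complex.ofReal_im, mul_zero, Real.exp_zero, div_one]

private lemma tc_bound {q : ℂ} (hq : q ≠ 0) (σ0 σ1 : ℂ) (m : ℤ) :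
    ‖tc q σ0 σ1 m‖
      ≤ (max (‖σ0‖) (‖σ1‖))
        * (Real.exp ((0:ℝ) * |(m:ℝ)|) * (‖q‖) ^ (((m:ℝ)/2) ^ 2)) := by
  rw [zero_mul, Real.exp_zero, one_mul, tc, norm_mul, abs_cpow_half_sq hq]
  apply mul_le_mul_of_nonneg_right _ (Real.rpow_nonneg (norm_nonneg q) _)
  by_cases h : Even m <;> simp [h, le_max_left, le_max_right]

private lemma tc_shift {q : ℂ} (hq : q ≠ 0) (σ0 σ1 : ℂ) (z : ℂ) (m : ℤ) :
    tc q σ0 σ1 m * Complex.exp (m * (z + Complex.log q))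
      = Complex.exp (-Complex.log q - 2*z) * (tc q σ0 σ1 (m+2) * Complex.exp ((m+2 : ℤ) * z)) := by
  have hcoeff : (if Even (m+2) then σ0 else σ1) = (if Even m then σ0 else σ1) := by
    have : Even (m + 2) ↔ Even m := by
      constructor
      · intro h; rcases h with ⟨r, hr⟩; exact ⟨r - 1, by omega⟩
      · intro h; rcases h with ⟨r, hr⟩; exact ⟨r + 1, by omega⟩
    simp [this]
  set A : ℂ := (if Even m then σ0 else σ1) with hA
  have key : q ^ (((m : ℂ) / 2) ^ 2) * Complex.exp (m * (z + Complex.log q))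
      = Complex.exp (-Complex.log q - 2*z)
        * q ^ ((((m+2 : ℤ) : ℂ)) / 2) ^ 2 * Complex.exp (((m+2 : ℤ) : ℂ) * z) := by
    have h2 : (((((m+2 : ℤ)) : ℂ)) / 2) ^ 2 = ((m : ℂ) / 2) ^ 2 + ((m : ℂ) + 1) := by
      push_cast; ring
    have h3 : q ^ (((((m+2 : ℤ)) : ℂ)) / 2) ^ 2
        = q ^ (((m : ℂ) / 2) ^ 2) * (q ^ m * q) := by
      rw [h2, Complex.cpow_add _ _ hq, Complex.cpow_add _ _ hq, Complex.cpow_one,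
        Complex.cpow_intCast]
    have h4 : Complex.exp ((m : ℂ) * (z + Complex.log q))
        = Complex.exp ((m:ℂ) * z) * q ^ m := by
      rw [mul_add, Complex.exp_add]
      congr 1
      rw [Complex.exp_int_mul, Complex.exp_log hq]
    have h5 : Complex.exp (((m+2 : ℤ) : ℂ) * z) = Complex.exp ((m:ℂ)*z) * Complex.exp (2*z) := by
      push_cast
      rw [add_mul, Complex.exp_add]
    have h6 : Complex.exp (-Complex.log q - 2*z) * (q * Complex.exp (2*z)) = 1 := by
      have h7 : q * Complex.exp (2*z) = Complex.exp (Complex.log q + 2*z) := by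
        rw [Complex.exp_add, Complex.exp_log hq]
      rw [h7, ← Complex.exp_add,
        show -Complex.log q - 2*z + (Complex.log q + 2*z) = 0 by ring, Complex.exp_zero]
    rw [h3, h4, h5]
    set B := q ^ (((m : ℂ) / 2) ^ 2)
    linear_combination (-(B * q ^ m * Complex.exp ((m:ℂ)*z))) * h6
  simp only [tc, hcoeff, ← hA]
  linear_combination A * key

/-- periodicity -/
private lemma G_periodic (q σ0 σ1 z : ℂ) :
    ∑' m : ℤ, tc q σ0 σ1 m * Complex.exp (m * (z + 2 * Real.pi * I))
      = ∑' m : ℤ, tc q σ0 σ1 m * Complex.exp (m * z) := by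
  apply tsum_congr
  intro m
  congr 1
  rw [mul_add, Complex.exp_add, Complex.exp_int_mul_two_pi_mul_I, mul_one]

/-- quasi-periodicity -/
private lemma G_quasi {q : ℂ} (hq : q ≠ 0) (σ0 σ1 z : ℂ) :
    ∑' m : ℤ, tc q σ0 σ1 m * Complex.exp (m * (z + Complex.log q))
      = Complex.exp (-Complex.log q - 2*z) * ∑' m : ℤ, tc q σ0 σ1 m * Complex.exp (m * z) := by
  calc ∑' m : ℤ, tc q σ0 σ1 m * Complex.exp (m * (z + Complex.log q))
      = ∑' m : ℤ, Complex.exp (-Complex.log q - 2*z)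
          * (tc q σ0 σ1 (m+2) * Complex.exp ((m+2 : ℤ) * z)) :=
        tsum_congr fun m => tc_shift hq σ0 σ1 z m
    _ = Complex.exp (-Complex.log q - 2*z)
          * ∑' m : ℤ, tc q σ0 σ1 (m+2) * Complex.exp ((m+2 : ℤ) * z) := tsum_mul_left
    _ = Complex.exp (-Complex.log q - 2*z) * ∑' m : ℤ, tc q σ0 σ1 m * Complex.exp (m * z) := by
        congr 1
        exact (Equiv.addRight (2:ℤ)).tsum_eq (fun m => tc q σ0 σ1 m * Complex.exp (m * z))

/-- even numbers equiv -/
private def evenEquiv : ℤ ≃ {m : ℤ // Even m} where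
  toFun n := ⟨2 * n, ⟨n, two_mul n⟩⟩
  invFun m := m.1 / 2
  left_inv n := by change (2 * n) / 2 = n; omega
  right_inv m := by
    rcases m with ⟨m, hm⟩
    rcases hm with ⟨r, hr⟩
    ext
    change 2 * (m / 2) = m
    omega

private def oddEquiv : ℤ ≃ {m : ℤ // ¬ Even m} where
  toFun n := ⟨2 * n + 1, by
    intro h
    rcases h with ⟨r, hr⟩
    omega⟩
  invFun m := m.1 / 2
  left_inv n := by change (2 * n + 1) / 2 = n; omega
  right_inv m := by
    rcases m with ⟨m, hm⟩
    have hodd : m % 2 = 1 := by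
      rcases Int.emod_two_eq_zero_or_one m with h | h
      · exfalso; exact hm ⟨m / 2, by omega⟩
      · exact h
    ext
    change 2 * (m / 2) + 1 = m
    omega

private lemma G_eq_theta {q : ℂ} (hq0 : 0 < ‖q‖) (hq1 : ‖q‖ < 1)
    (σ0 σ1 z : ℂ) :
    ∑' m : ℤ, tc q σ0 σ1 m * Complex.exp (m * z)
      = σ0 * theta0 q (Complex.exp z) + σ1 * theta1 q (Complex.exp z) := by
  have hq : q ≠ 0 := norm_ne_zero_iff.mp hq0.ne'
  -- summability of the σ0 = σ1 = 1 series
  have hone : Summable (fun m : ℤ => tc q 1 1 m * Complex.exp (m * z)) :=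
    theta_summable_s15 hq0 hq1 (fun m => tc_bound hq 1 1 m) z
  have htc_even : ∀ n : ℤ, tc q 1 1 (2 * n) = q ^ ((n:ℂ)^2) := by
    intro n
    rw [tc, if_pos ⟨n, two_mul n⟩, one_mul]
    congr 1
    push_cast
    ring
  have htc_odd : ∀ n : ℤ, tc q 1 1 (2 * n + 1) = q ^ (((n:ℂ) + 1/2)^2) := by
    intro n
    rw [tc, if_neg (by intro h; rcases h with ⟨r, hr⟩; omega), one_mul]
    congr 1
    push_cast
    ring
  -- summability of theta0 series at exp z
  have hs0 : Summable (fun n : ℤ => Complex.exp ((2 * n : ℤ) * z) * q ^ ((n:ℂ)^2)) := by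
    have hinj : Function.Injective (fun n : ℤ => 2 * n) := fun a b h => by dsimp only at h; omega
    have := hone.comp_injective hinj
    refine this.congr fun n => ?_
    simp only [Function.comp_apply]
    rw [htc_even n, mul_comm]
  have hs1 : Summable (fun n : ℤ => Complex.exp ((2 * n + 1 : ℤ) * z) * q ^ (((n:ℂ) + 1/2)^2)) := by
    have hinj : Function.Injective (fun n : ℤ => 2 * n + 1) := fun a b h => by dsimp only at h; omega
    have := hone.comp_injective hinj
    refine this.congr fun n => ?_
    simp only [Function.comp_apply]
    rw [htc_odd n, mul_comm]
  have h0 : HasSum (fun n : ℤ => Complex.exp ((2 * n : ℤ) * z) * q ^ ((n:ℂ)^2))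
      (theta0 q (Complex.exp z)) := by
    have e : theta0 q (Complex.exp z)
        = ∑' n : ℤ, Complex.exp ((2 * n : ℤ) * z) * q ^ ((n:ℂ)^2) := by
      apply tsum_congr
      intro n
      rw [← Complex.exp_int_mul]
    rw [e]
    exact hs0.hasSum
  have h1 : HasSum (fun n : ℤ => Complex.exp ((2 * n + 1 : ℤ) * z) * q ^ (((n:ℂ) + 1/2)^2))
      (theta1 q (Complex.exp z)) := by
    have e : theta1 q (Complex.exp z)
        = ∑' n : ℤ, Complex.exp ((2 * n + 1 : ℤ) * z) * q ^ (((n:ℂ) + 1/2)^2) := by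
      apply tsum_congr
      intro n
      rw [← Complex.exp_int_mul]
    rw [e]
    exact hs1.hasSum
  -- the full sum via even/odd split
  set f : ℤ → ℂ := fun m => tc q σ0 σ1 m * Complex.exp (m * z) with hf
  have heven : HasSum (f ∘ ((↑) : {m : ℤ | Even m} → ℤ)) (σ0 * theta0 q (Complex.exp z)) := by
    apply (Equiv.hasSum_iff (evenEquiv : ℤ ≃ {m : ℤ // Even m})).mp
    have : ((f ∘ ((↑) : {m : ℤ | Even m} → ℤ)) ∘ evenEquiv)
        = fun n : ℤ => σ0 * (Complex.exp ((2 * n : ℤ) * z) * q ^ ((n:ℂ)^2)) := by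
      funext n
      show tc q σ0 σ1 (2 * n) * Complex.exp (((2 * n : ℤ) : ℂ) * z)
        = σ0 * (Complex.exp ((2 * n : ℤ) * z) * q ^ ((n:ℂ)^2))
      rw [tc, if_pos ⟨n, two_mul n⟩]
      have : q ^ ((((2 * n : ℤ) : ℂ)) / 2) ^ 2 = q ^ ((n:ℂ)^2) := by
        congr 1
        push_cast
        ring
      rw [this]
      ring
    rw [this]
    exact h0.mul_left σ0
  have hodd : HasSum (f ∘ ((↑) : ({m : ℤ | Even m}ᶜ : Set ℤ) → ℤ)) (σ1 * theta1 q (Complex.exp z)) := by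
    apply (Equiv.hasSum_iff (oddEquiv : ℤ ≃ {m : ℤ // ¬ Even m})).mp
    have : ((f ∘ ((↑) : ({m : ℤ | Even m}ᶜ : Set ℤ) → ℤ)) ∘ oddEquiv)
        = fun n : ℤ => σ1 * (Complex.exp ((2 * n + 1 : ℤ) * z) * q ^ (((n:ℂ) + 1/2)^2)) := by
      funext n
      show tc q σ0 σ1 (2 * n + 1) * Complex.exp (((2 * n + 1 : ℤ) : ℂ) * z)
        = σ1 * (Complex.exp ((2 * n + 1 : ℤ) * z) * q ^ (((n:ℂ) + 1/2)^2))
      rw [tc, if_neg (by intro h; rcases h with ⟨r, hr⟩; omega)]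
      have : q ^ ((((2 * n + 1 : ℤ) : ℂ)) / 2) ^ 2 = q ^ (((n:ℂ) + 1/2)^2) := by
        congr 1
        push_cast
        ring
      rw [this]
      ring
    rw [this]
    exact h1.mul_left σ1
  exact (heven.add_compl hodd).tsum_eq

/-- A continuous function whose exponential is constantly 1 is constant. -/
private lemma psi_const {ψ : ℂ → ℂ} (hψ : Continuous ψ)
    (h1 : ∀ z, Complex.exp (ψ z) = 1) (z w : ℂ) : ψ z = ψ w := by
  set E : Set ℂ := {x | ψ x = ψ w} with hE
  have hclosed : IsClosed E := isClosed_eq hψ continuous_const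
  have hopen : IsOpen E := by
    rw [isOpen_iff_mem_nhds]
    intro x hx
    have hcont : ContinuousAt (fun y => ψ y - ψ x) x := (hψ.sub continuous_const).continuousAt
    have hball : Metric.ball (0:ℂ) (2 * Real.pi) ∈ nhds (ψ x - ψ x) := by
      rw [sub_self]
      exact Metric.ball_mem_nhds 0 (by positivity)
    have hpre := hcont.preimage_mem_nhds hball
    apply Filter.mem_of_superset hpre
    intro y hy
    simp only [Set.mem_preimage, Metric.mem_ball, Complex.dist_eq, sub_zero] at hy
    obtain ⟨n, hn⟩ := Complex.exp_eq_one_iff.mp (h1 y)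
    obtain ⟨nx, hnx⟩ := Complex.exp_eq_one_iff.mp (h1 x)
    have hdiff : ψ y - ψ x = ((n - nx : ℤ) : ℂ) * (2 * Real.pi * I) := by
      rw [hn, hnx]
      push_cast
      ring
    rw [hdiff] at hy
    have habs : ‖((n - nx : ℤ) : ℂ) * (2 * Real.pi * I)‖
        = |((n - nx : ℤ) : ℝ)| * (2 * Real.pi) := by
      rw [norm_mul, Complex.norm_intCast]
      congr 1
      rw [norm_mul, Complex.norm_I, mul_one]
      rw [norm_mul, Complex.norm_real]
      simp [abs_of_pos Real.pi_pos]
    rw [habs] at hy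
    have hlt : |((n - nx : ℤ) : ℝ)| < 1 := by
      by_contra hcon
      push_neg at hcon
      have : 2 * Real.pi ≤ |((n - nx : ℤ) : ℝ)| * (2 * Real.pi) := by
        nlinarith [Real.pi_pos]
      linarith
    have hzero : n - nx = 0 := by
      have h2 : ((|n - nx| : ℤ) : ℝ) < 1 := by rwa [Int.cast_abs]
      have h3 : |n - nx| < 1 := by exact_mod_cast h2
      have h5 := le_abs_self (n - nx)
      have h6 := neg_abs_le (n - nx)
      omega
    have : ψ y = ψ x := by
      rw [hn, hnx, hzero |> sub_eq_zero.mp]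
    show ψ y = ψ w
    rw [this, hx]
  have : E = Set.univ := IsClopen.eq_univ ⟨hclosed, hopen⟩ ⟨w, rfl⟩
  have hz : z ∈ E := this ▸ Set.mem_univ z
  exact hz

/-- A nonvanishing differentiable function on `ℂ` with continuous-looking derivative
has a continuous logarithm. -/
private lemma exists_exp_eq {G D : ℂ → ℂ} (hGd : ∀ z, HasDerivAt G (D z) z)
    (hDcont : Continuous D) (hGne : ∀ z, G z ≠ 0) :
    ∃ h : ℂ → ℂ, Continuous h ∧ ∀ z, Complex.exp (h z) = G z := by
  have hGcont : Continuous G := continuous_iff_continuousAt.mpr fun z => (hGd z).continuousAt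
  refine ⟨fun z => Complex.log (G 0) + ∫ t in (0:ℝ)..1, z * D ((t:ℂ) * z) / G ((t:ℂ) * z),
    ?_, ?_⟩
  · apply continuous_const.add
    have huncurry : Continuous (Function.uncurry
        (fun (z : ℂ) (t : ℝ) => z * D ((t:ℂ) * z) / G ((t:ℂ) * z))) := by
      apply Continuous.div
      · exact continuous_fst.mul (hDcont.comp
          ((Complex.continuous_ofReal.comp continuous_snd).mul continuous_fst))
      · exact hGcont.comp ((Complex.continuous_ofReal.comp continuous_snd).mul continuous_fst)
      · intro p; exact hGne _
    exact continuous_parametric_intervalIntegral_of_continuous huncurry continuous_const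
  · intro z
    set ν : ℝ → ℂ := fun t => z * D ((t:ℂ) * z) / G ((t:ℂ) * z) with hν
    have hνcont : Continuous ν := by
      apply Continuous.div
      · exact continuous_const.mul (hDcont.comp (Complex.continuous_ofReal.mul continuous_const))
      · exact hGcont.comp (Complex.continuous_ofReal.mul continuous_const)
      · intro t; exact hGne _
    set I1 : ℝ → ℂ := fun u => ∫ t in (0:ℝ)..u, ν t with hI1
    have hI1d : ∀ u : ℝ, HasDerivAt I1 (ν u) u := fun u =>
      intervalIntegral.integral_hasDerivAt_right (hνcont.intervalIntegrable _ _)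
        (hνcont.stronglyMeasurableAtFilter _ _) hνcont.continuousAt
    set φ : ℝ → ℂ := fun u => Complex.exp (-(Complex.log (G 0) + I1 u)) * G ((u:ℂ) * z) with hφ
    have hφd : ∀ u : ℝ, HasDerivAt φ 0 u := by
      intro u
      have hA : HasDerivAt (fun u : ℝ => -(Complex.log (G 0) + I1 u)) (-ν u) u :=
        ((hI1d u).const_add (Complex.log (G 0))).neg
      have hB := hA.cexp
      have hC : HasDerivAt (fun w : ℂ => G (w * z)) (D ((u:ℂ) * z) * z) ((u:ℂ)) := by
        have := (hGd ((u:ℂ) * z)).comp (u:ℂ) ((hasDerivAt_id ((u:ℂ))).mul_const z)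
        rw [one_mul] at this
        exact this
      have hC2 : HasDerivAt (fun u : ℝ => G ((u:ℂ) * z)) (D ((u:ℂ) * z) * z) u :=
        hC.comp_ofReal
      have hprod := hB.mul hC2
      have hzero : Complex.exp (-(Complex.log (G 0) + I1 u)) * -ν u * G ((u:ℂ) * z)
          + Complex.exp (-(Complex.log (G 0) + I1 u)) * (D ((u:ℂ) * z) * z) = 0 := by
        have hg : G ((u:ℂ) * z) ≠ 0 := hGne _
        have hdiv : z * D ((u:ℂ) * z) / G ((u:ℂ) * z) * G ((u:ℂ) * z) = z * D ((u:ℂ) * z) :=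
          div_mul_cancel₀ _ hg
        rw [hν]
        beta_reduce
        linear_combination (-(Complex.exp (-(Complex.log (G 0) + I1 u)))) * hdiv
      rw [← hzero]
      exact hprod
    have hφconst : φ 1 = φ 0 :=
      is_const_of_deriv_eq_zero (fun u => (hφd u).differentiableAt)
        (fun u => (hφd u).deriv) 1 0
    have hφ0 : φ 0 = 1 := by
      rw [hφ]
      simp only [hI1, intervalIntegral.integral_same, add_zero, Complex.ofReal_zero, zero_mul]
      rw [Complex.exp_neg, Complex.exp_log (hGne 0), inv_mul_cancel₀ (hGne 0)]
    have hφ1 : φ 1 = Complex.exp (-(Complex.log (G 0) + I1 1)) * G z := by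
      rw [hφ]
      norm_num
    have hkey : Complex.exp (-(Complex.log (G 0) + I1 1)) * G z = 1 := by
      rw [← hφ1, hφconst, hφ0]
    show Complex.exp (Complex.log (G 0) + I1 1) = G z
    have hee : Complex.exp (Complex.log (G 0) + I1 1)
        * (Complex.exp (-(Complex.log (G 0) + I1 1)) * G z)
        = Complex.exp (Complex.log (G 0) + I1 1) := by rw [hkey, mul_one]
    calc Complex.exp (Complex.log (G 0) + I1 1)
        = Complex.exp (Complex.log (G 0) + I1 1)
          * Complex.exp (-(Complex.log (G 0) + I1 1)) * G z := by rw [mul_assoc, hee]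
      _ = G z := by rw [← Complex.exp_add, add_neg_cancel, Complex.exp_zero, one_mul]

/-- Every nonzero section `σ⁰θ⁰ + σ¹θ¹` has a zero: for `(σ⁰,σ¹) ≠ (0,0)`
there exists `w ≠ 0` with `σ⁰θ⁰(w) + σ¹θ¹(w) = 0`. -/
theorem section_has_zero (q : ℂ) (hq0 : 0 < ‖q‖) (hq1 : ‖q‖ < 1)
    (σ0 σ1 : ℂ) (hσ : (σ0, σ1) ≠ (0, 0)) :
    ∃ w : ℂ, w ≠ 0 ∧ σ0 * theta0 q w + σ1 * theta1 q w = 0 := by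
  by_contra hcon
  push_neg at hcon
  have hq : q ≠ 0 := norm_ne_zero_iff.mp hq0.ne'
  have hS0 : (0:ℝ) ≤ max (‖σ0‖) (‖σ1‖) :=
    le_trans (norm_nonneg σ0) (le_max_left _ _)
  set G : ℂ → ℂ := fun z => ∑' m : ℤ, tc q σ0 σ1 m * Complex.exp (m * z) with hGdef
  set D : ℂ → ℂ := fun z => ∑' m : ℤ, (m : ℂ) * tc q σ0 σ1 m * Complex.exp (m * z) with hDdef
  have hGne : ∀ z, G z ≠ 0 := by
    intro z
    show (∑' m : ℤ, tc q σ0 σ1 m * Complex.exp (m * z)) ≠ 0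
    rw [G_eq_theta hq0 hq1 σ0 σ1 z]
    exact hcon (Complex.exp z) (Complex.exp_ne_zero z)
  have hGd : ∀ z, HasDerivAt G (D z) z := by
    intro z
    exact theta_hasDerivAt hq0 hq1 hS0 (tc_bound hq σ0 σ1) z
  have hDd : ∀ z, HasDerivAt D
      (∑' m : ℤ, (m:ℂ) * ((m:ℂ) * tc q σ0 σ1 m) * Complex.exp (m * z)) z := by
    intro z
    exact theta_hasDerivAt hq0 hq1 hS0 (theta_freq_bound hS0 (tc_bound hq σ0 σ1)) z
  have hDcont : Continuous D := continuous_iff_continuousAt.mpr fun z => (hDd z).continuousAt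
  obtain ⟨h, hhcont, hhexp⟩ := exists_exp_eq hGd hDcont hGne
  set τ : ℂ := Complex.log q with hτ
  set a : ℂ := 2 * Real.pi * I with ha
  have hGper : ∀ x : ℂ, G (x + a) = G x := by
    intro x
    show (∑' m : ℤ, tc q σ0 σ1 m * Complex.exp (m * (x + a))) = _
    rw [ha]
    exact G_periodic q σ0 σ1 x
  have hGquasi : ∀ x : ℂ, G (x + τ) = Complex.exp (-τ - 2*x) * G x := by
    intro x
    show (∑' m : ℤ, tc q σ0 σ1 m * Complex.exp (m * (x + τ))) = _
    rw [hτ]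
    exact G_quasi hq σ0 σ1 x
  -- the two quasi-period functions
  have hψ1cont : Continuous (fun x : ℂ => h (x + a) - h x) :=
    (hhcont.comp (continuous_id.add continuous_const)).sub hhcont
  have hψ1exp : ∀ x : ℂ, Complex.exp (h (x + a) - h x) = 1 := by
    intro x
    rw [Complex.exp_sub, hhexp, hhexp, hGper x, div_self (hGne x)]
  have hψ2cont : Continuous (fun x : ℂ => h (x + τ) - h x + 2*x + τ) := by
    apply Continuous.add
    apply Continuous.add
    · exact (hhcont.comp (continuous_id.add continuous_const)).sub hhcont
    · exact continuous_const.mul continuous_id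
    · exact continuous_const
  have hψ2exp : ∀ x : ℂ, Complex.exp (h (x + τ) - h x + 2*x + τ) = 1 := by
    intro x
    rw [show h (x + τ) - h x + 2*x + τ = (h (x + τ) - h x) + (2*x + τ) by ring,
      Complex.exp_add, Complex.exp_sub, hhexp, hhexp, hGquasi x, mul_div_assoc,
      div_self (hGne x), mul_one, ← Complex.exp_add,
      show -τ - 2*x + (2*x + τ) = 0 by ring, Complex.exp_zero]
  have e1 : h (a + τ) - h a + 2*a + τ = h (0 + τ) - h 0 + 2*0 + τ :=
    psi_const hψ2cont hψ2exp a 0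
  have e2 : h (τ + a) - h τ = h (0 + a) - h 0 :=
    psi_const hψ1cont hψ1exp τ 0
  have hca : h (a + τ) = h (τ + a) := by rw [add_comm]
  have hz1 : h (0 + τ) = h τ := by rw [zero_add]
  have hz2 : h (0 + a) = h a := by rw [zero_add]
  have h2a : (2:ℂ) * a = 0 := by linear_combination e1 - e2 - hca + hz1 - hz2
  rw [ha] at h2a
  have hπ : (Real.pi : ℂ) ≠ 0 := Complex.ofReal_ne_zero.mpr Real.pi_ne_zero
  have : (2:ℂ) * (2 * Real.pi * I) ≠ 0 :=
    mul_ne_zero two_ne_zero (mul_ne_zero (mul_ne_zero two_ne_zero hπ) Complex.I_ne_zero)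
  exact this h2a
end
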